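/- arXiv:math/0212334 — 4 statements merged into one kernel-verified Lean document; each statement's English description precedes it below -/
import Mathlib

section
/- Any finite collection of pairwise commuting invertible complex n×n matrices M₁, …, M_k admits pairwise commuting matrices A₁, …, A_k with exp(2πi A_j) = M_j for each j. -/
open scoped BigOperators

noncomputable section

/-- A point of `ℂ^m`. -/
abbrev Pt (m : ℕ) := Fin m → ℂ

/-- A scalar `k`-form on (an open subset of) `ℂ^m`, represented by its coefficient
functions in the antisymmetric representation. -/
def Form (m k : ℕ) := Pt m → (Fin k → Fin m) → ℂ

namespace Form

/-- Exterior derivative, coefficientwise via `fderiv`. -/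
def d {m k : ℕ} (ω : Form m k) : Form m (k + 1) := fun x idx =>
  ∑ j : Fin (k + 1),
    (-1 : ℂ) ^ (j : ℕ) *
      fderiv ℂ (fun y => ω y fun a => idx (j.succAbove a)) x (Pi.single (idx j) 1)

/-- Exterior differential of a function (`0`-form). -/
def dFun {m : ℕ} (g : Pt m → ℂ) : Form m 1 :=
  Form.d (fun x (_ : Fin 0 → Fin m) => g x)

/-- Wedge product (with the standard normalization). -/
def wedge {m k l : ℕ} (α : Form m k) (β : Form m l) : Form m (k + l) := fun x idx =>
  ((k.factorial * l.factorial : ℂ))⁻¹ *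
    ∑ σ : Equiv.Perm (Fin (k + l)),
      ((Equiv.Perm.sign σ : ℤ) : ℂ) *
        (α x fun a => idx (σ (Fin.castAdd l a))) *
        (β x fun b => idx (σ (Fin.natAdd k b)))

/-- Wedge with a `1`-form on the left. -/
def oneWedge {m k : ℕ} (α : Form m 1) (ω : Form m k) : Form m (k + 1) := fun x idx =>
  ∑ j : Fin (k + 1),
    (-1 : ℂ) ^ (j : ℕ) * α x (fun _ => idx j) * ω x fun a => idx (j.succAbove a)

/-- Wedge with a `1`-form on the right. -/
def wedgeOne {m k : ℕ} (ω : Form m k) (α : Form m 1) : Form m (k + 1) := fun x idx =>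
  (-1 : ℂ) ^ k * oneWedge α ω x idx

/-- Holomorphy of a form on a set: every coefficient function is holomorphic there. -/
def IsHolomorphicOn {m k : ℕ} (ω : Form m k) (U : Set (Pt m)) : Prop :=
  ∀ idx, DifferentiableOn ℂ (fun x => ω x idx) U

end Form

/-- `∇ = d - α ∧ ·`, the covariant derivative attached to a scalar `1`-form `α`. -/
def nabla {m k : ℕ} (α : Form m 1) (ω : Form m k) : Form m (k + 1) := fun x idx =>
  Form.d ω x idx - Form.oneWedge α ω x idx

/-- Matrix-valued `k`-forms on `ℂ^m`. -/
def MForm (n m k : ℕ) := Fin n → Fin n → Form m k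

namespace MForm

def d {n m k : ℕ} (Ω : MForm n m k) : MForm n m (k + 1) := fun p q => Form.d (Ω p q)

def wedge {n m k l : ℕ} (Ω : MForm n m k) (Θ : MForm n m l) : MForm n m (k + l) :=
  fun p q x idx => ∑ r, Form.wedge (Ω p r) (Θ r q) x idx

def IsHolomorphicOn {n m k : ℕ} (Ω : MForm n m k) (U : Set (Pt m)) : Prop :=
  ∀ p q, Form.IsHolomorphicOn (Ω p q) U

/-- The matrix `0`-form attached to a matrix-valued function. -/
def ofFun {n m : ℕ} (X : Pt m → Matrix (Fin n) (Fin n) ℂ) : MForm n m 0 :=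
  fun p q x _ => X x p q

end MForm

/-- `ω` has (at most) a logarithmic pole on `Σ = {f = 0}` inside `U`:
`ω` is holomorphic off `Σ`, and both `f·ω` and `f·dω` extend holomorphically to `U`. -/
def HasLogPole {m k : ℕ} (U : Set (Pt m)) (f : Pt m → ℂ) (ω : Form m k) : Prop :=
  Form.IsHolomorphicOn ω (U \ {x | f x = 0}) ∧
  (∃ g : Form m k, Form.IsHolomorphicOn g U ∧
      ∀ x ∈ U \ {x | f x = 0}, ∀ idx, g x idx = f x * ω x idx) ∧
  (∃ h : Form m (k + 1), Form.IsHolomorphicOn h U ∧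
      ∀ x ∈ U \ {x | f x = 0}, ∀ idx, h x idx = f x * Form.d ω x idx)

/-- Standing assumption on the (square-free) local equation `f` of the hypersurface
`Σ = {f = 0}`: the smooth points of `Σ` are dense in it (the non-smooth locus is small). -/
def SmoothPointsDense {m : ℕ} (U : Set (Pt m)) (f : Pt m → ℂ) : Prop :=
  ∀ x ∈ U, f x = 0 → ∀ V ∈ nhds x, ∃ y ∈ V ∩ U, f y = 0 ∧ fderivWithin ℂ f U y ≠ 0

namespace Stmt2Aux
open Polynomial


noncomputable def Lhat (d : ℕ) : ℂ[X] := ∑ k ∈ Finset.range d, C ((-1)^k / (k+1) : ℂ) * X^k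

noncomputable def Lp (d : ℕ) : ℂ[X] := X * Lhat d

noncomputable def Qp (d : ℕ) : ℂ[X] :=
  ∑ k ∈ Finset.range (d+1), C (((k.factorial : ℂ))⁻¹) * (Lp d)^k

lemma Lp_expand (d : ℕ) : Lp d = ∑ k ∈ Finset.range d, C ((-1)^k / (k+1) : ℂ) * X^(k+1) := by
  rw [Lp, Lhat, Finset.mul_sum]
  refine Finset.sum_congr rfl fun k _ => by ring

lemma derivative_Lp (d : ℕ) : derivative (Lp d) = ∑ k ∈ Finset.range d, (-X : ℂ[X])^k := by
  rw [Lp_expand, map_sum]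
  refine Finset.sum_congr rfl fun k _ => ?_
  rw [derivative_C_mul, derivative_X_pow]
  have h : ((k : ℂ) + 1) ≠ 0 := by
    have := Nat.cast_ne_zero (R := ℂ).mpr (Nat.succ_ne_zero k)
    push_cast at this; exact this
  have h2 : ((-X : ℂ[X]))^k = C ((-1 : ℂ)^k) * X^k := by
    rw [neg_pow, map_pow, map_neg, map_one]
  rw [h2, ← mul_assoc, ← C_mul]
  congr 1
  push_cast
  field_simp


lemma geom_part (d : ℕ) :
    (1 + X) * ∑ k ∈ Finset.range d, (-X : ℂ[X])^k = 1 - (-X)^d := by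
  linear_combination -geom_sum_mul (-X : ℂ[X]) d

lemma derivative_Qp (d : ℕ) :
    derivative (Qp d) = (∑ k ∈ Finset.range d, (-X : ℂ[X])^k) *
      ∑ k ∈ Finset.range d, C (((k.factorial : ℂ))⁻¹) * (Lp d)^k := by
  rw [Qp, map_sum, Finset.sum_range_succ', Finset.mul_sum]
  have h0 : derivative (C (((Nat.factorial 0 : ℂ))⁻¹) * Lp d ^ 0) = 0 := by
    simp
  rw [h0, add_zero]
  refine Finset.sum_congr rfl fun k _ => ?_
  rw [derivative_C_mul, derivative_pow, derivative_Lp, Nat.add_sub_cancel,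
    ← mul_assoc, ← mul_assoc, ← C_mul]
  have h1 : (k.factorial : ℂ) ≠ 0 := Nat.cast_ne_zero.mpr (Nat.factorial_ne_zero k)
  have h2 : ((k : ℂ) + 1) ≠ 0 := by
    have := Nat.cast_ne_zero (R := ℂ).mpr (Nat.succ_ne_zero k)
    push_cast at this; exact this
  have hsc : (((k+1).factorial : ℂ))⁻¹ * ((k+1 : ℕ) : ℂ) = ((k.factorial : ℂ))⁻¹ := by
    rw [Nat.factorial_succ]
    push_cast
    field_simp
  rw [hsc]
  ring

lemma key_step (d : ℕ) :
    ∃ E : ℂ[X], (1 + X) * derivative (Qp d) = Qp d + X^d * E := by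
  set G : ℂ[X] := ∑ k ∈ Finset.range d, (-X : ℂ[X])^k with hG
  set S : ℂ[X] := ∑ k ∈ Finset.range d, C (((k.factorial : ℂ))⁻¹) * (Lp d)^k with hS
  have hQ' : derivative (Qp d) = G * S := derivative_Qp d
  have hgeom : (1 + X) * G = 1 - (-X)^d := geom_part d
  have hQS : Qp d = S + C (((d.factorial : ℂ))⁻¹) * Lp d ^ d := by
    rw [Qp, Finset.sum_range_succ]
  have hpow : Lp d ^ d = X^d * Lhat d ^ d := by rw [Lp, mul_pow]
  refine ⟨-(C (((d.factorial : ℂ))⁻¹) * Lhat d ^ d) - (-1)^d * S, ?_⟩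
  linear_combination (1+X) * hQ' + S * hgeom - hQS - C (((d.factorial : ℂ))⁻¹) * hpow

lemma coeff_D (d : ℕ) : ∀ j, j ≤ d → (Qp d - 1 - X).coeff j = 0 := by
  obtain ⟨E, hE⟩ := key_step d
  set D : ℂ[X] := Qp d - 1 - X with hD
  have hder : derivative D = derivative (Qp d) - 1 := by
    rw [hD]; simp
  have hkey : (1 + X) * derivative D = D + X^d * E := by
    rw [hder]; linear_combination hE
  have hQ0 : (Qp d).coeff 0 = 1 := by
    rw [Polynomial.coeff_zero_eq_eval_zero, Qp]
    simp only [Lp, Finset.sum_range_succ']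
    rw [eval_add]
    simp [eval_finset_sum]
  have h0 : D.coeff 0 = 0 := by
    rw [hD]
    simp [hQ0]
  intro j
  induction j with
  | zero => intro _; exact h0
  | succ i ih =>
    intro hle
    have hi : D.coeff i = 0 := ih (le_trans (Nat.le_succ i) hle)
    have hid := congrArg (fun p : ℂ[X] => p.coeff i) hkey
    simp only [coeff_add] at hid
    have hL : ((1 + X) * derivative D).coeff i
        = (derivative D).coeff i + (X * derivative D).coeff i := by
      rw [add_mul, one_mul, coeff_add]
    have hXd : (X * derivative D).coeff i = 0 := by
      cases i with
      | zero => simp [mul_coeff_zero]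
      | succ m =>
        rw [coeff_X_mul, coeff_derivative, hi, zero_mul]
    have hR : (X ^ d * E).coeff i = 0 := by
      have hdvd : (X : ℂ[X])^d ∣ X^d * E := dvd_mul_right _ _
      exact (Polynomial.X_pow_dvd_iff.mp hdvd) i (lt_of_lt_of_le (Nat.lt_succ_self i) hle)
    rw [hL, hXd, add_zero, coeff_derivative, hR, add_zero, hi] at hid
    have hne : ((i : ℂ) + 1) ≠ 0 := by
      have := Nat.cast_ne_zero (R := ℂ).mpr (Nat.succ_ne_zero i)
      push_cast at this; exact this
    exact (mul_eq_zero.mp hid).resolve_right hne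

lemma Qp_eq (d : ℕ) : ∃ R : ℂ[X], Qp d = 1 + X + X^(d+1) * R := by
  have hdvd : (X : ℂ[X])^(d+1) ∣ (Qp d - 1 - X) :=
    Polynomial.X_pow_dvd_iff.mpr (fun j hj => coeff_D d j (Nat.lt_succ_iff.mp hj))
  obtain ⟨R, hR⟩ := hdvd
  exact ⟨R, by linear_combination hR⟩

lemma exp_aeval_Lp {N : ℕ} (A : Matrix (Fin N) (Fin N) ℂ) (d : ℕ) (hA : A ^ (d+1) = 0) :
    NormedSpace.exp (aeval A (Lp d)) = 1 + A := by
  have hnil : ∀ k, k ∉ Finset.range (d+1) →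
      ((k.factorial : ℂ))⁻¹ • (aeval A (Lp d)) ^ k = 0 := by
    intro k hk
    rw [Finset.mem_range, Nat.not_lt] at hk
    have hAk : A ^ k = 0 := by
      calc A ^ k = A^(d+1) * A^(k-(d+1)) := by rw [← pow_add, Nat.add_sub_cancel' hk]
      _ = 0 := by rw [hA, zero_mul]
    rw [← map_pow, Lp, mul_pow, map_mul, map_pow, aeval_X, hAk, zero_mul, smul_zero]
  rw [NormedSpace.exp_eq_tsum ℂ]
  beta_reduce
  rw [tsum_eq_sum hnil]
  obtain ⟨R, hR⟩ := Qp_eq d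
  have hQ : ∑ k ∈ Finset.range (d+1), ((k.factorial : ℂ))⁻¹ • (aeval A (Lp d))^k
      = aeval A (Qp d) := by
    rw [Qp, map_sum]
    refine Finset.sum_congr rfl fun k _ => ?_
    rw [map_mul, map_pow, aeval_C, Algebra.smul_def]
  rw [hQ, hR]
  rw [map_add, map_add, map_one, map_mul, map_pow, aeval_X, hA, zero_mul, add_zero]

lemma aeval_comm {N : ℕ} (M : Matrix (Fin N) (Fin N) ℂ) (f g : ℂ[X]) :
    aeval M f * aeval M g = aeval M g * aeval M f := by
  rw [← map_mul, ← map_mul, mul_comm]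

lemma aeval_pow_mul_eq {N : ℕ} (M : Matrix (Fin N) (Fin N) ℂ) (f g h : ℂ[X])
    (hagree : aeval M f * aeval M h = aeval M g * aeval M h) (k : ℕ) :
    (aeval M f)^k * aeval M h = (aeval M g)^k * aeval M h := by
  induction k with
  | zero => simp
  | succ k ih =>
    calc (aeval M f)^(k+1) * aeval M h = (aeval M f)^k * (aeval M f * aeval M h) := by
          rw [pow_succ, mul_assoc]
      _ = (aeval M f)^k * (aeval M g * aeval M h) := by rw [hagree]
      _ = aeval M g * ((aeval M f)^k * aeval M h) := by
          rw [← map_pow, ← mul_assoc, aeval_comm M (f^k) g, mul_assoc]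
      _ = aeval M g * ((aeval M g)^k * aeval M h) := by rw [ih]
      _ = (aeval M g)^(k+1) * aeval M h := by rw [← mul_assoc, ← pow_succ']

lemma exp_aeval_mul_aeval {N : ℕ} (M : Matrix (Fin N) (Fin N) ℂ) (f g h : ℂ[X])
    (hagree : aeval M f * aeval M h = aeval M g * aeval M h) :
    NormedSpace.exp (aeval M f) * aeval M h = NormedSpace.exp (aeval M g) * aeval M h := by
  letI : SeminormedRing (Matrix (Fin N) (Fin N) ℂ) := Matrix.linftyOpSemiNormedRing
  letI : NormedRing (Matrix (Fin N) (Fin N) ℂ) := Matrix.linftyOpNormedRing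
  letI : NormedAlgebra ℂ (Matrix (Fin N) (Fin N) ℂ) := Matrix.linftyOpNormedAlgebra
  rw [NormedSpace.exp_eq_tsum ℂ]
  beta_reduce
  erw [← (NormedSpace.expSeries_summable' (𝕂 := ℂ) (aeval M f)).tsum_mul_right,
    ← (NormedSpace.expSeries_summable' (𝕂 := ℂ) (aeval M g)).tsum_mul_right]
  congr 1
  funext k
  rw [smul_mul_assoc, smul_mul_assoc, aeval_pow_mul_eq M f g h hagree k]

lemma aeval_zero_of_dvd {N : ℕ} (M : Matrix (Fin N) (Fin N) ℂ) {f : ℂ[X]}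
    (h : M.charpoly ∣ f) : aeval M f = 0 := by
  obtain ⟨q, hq⟩ := h
  rw [hq, map_mul, Matrix.aeval_self_charpoly, zero_mul]

lemma aeval_eq_of_dvd {N : ℕ} (M : Matrix (Fin N) (Fin N) ℂ) {f g : ℂ[X]}
    (h : M.charpoly ∣ f - g) : aeval M f = aeval M g := by
  have h2 := aeval_zero_of_dvd M h
  rw [map_sub, sub_eq_zero] at h2
  exact h2

lemma exists_exp_aeval {N : ℕ} (M : Matrix (Fin N) (Fin N) ℂ) (hM : IsUnit M) :
    ∃ p : ℂ[X], NormedSpace.exp (aeval M p) = M := by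
  classical
  letI : SeminormedRing (Matrix (Fin N) (Fin N) ℂ) := Matrix.linftyOpSemiNormedRing
  letI : NormedRing (Matrix (Fin N) (Fin N) ℂ) := Matrix.linftyOpNormedRing
  letI : NormedAlgebra ℂ (Matrix (Fin N) (Fin N) ℂ) := Matrix.linftyOpNormedAlgebra
  set χ := M.charpoly with hχdef
  have hmonic : χ.Monic := Matrix.charpoly_monic M
  have hne : χ ≠ 0 := hmonic.ne_zero
  set I := χ.roots.toFinset with hIdef
  set μ : ℂ → ℕ := fun a => rootMultiplicity a χ with hμ
  have hsplit : χ = ∏ a ∈ I, (X - C a)^(μ a) := by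
    conv_lhs => rw [(IsAlgClosed.splits χ).eq_prod_roots_of_monic hmonic]
    exact prod_multiset_root_eq_finset_root
  have hdet : M.det ≠ 0 := ((Matrix.isUnit_iff_isUnit_det M).mp hM).ne_zero
  have hroot0 : ∀ a ∈ I, a ≠ 0 := by
    intro a ha ha0
    subst ha0
    have hroot : χ.IsRoot 0 := isRoot_of_mem_roots (Multiset.mem_toFinset.mp ha)
    have : χ.coeff 0 = 0 := by rwa [Polynomial.coeff_zero_eq_eval_zero]
    apply hdet
    rw [Matrix.det_eq_sign_charpoly_coeff, ← hχdef, this, mul_zero]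
  have hcop : (I : Set ℂ).Pairwise (Function.onFun IsCoprime fun a => (X - C a)^(μ a)) := by
    intro a _ b _ hab
    exact (Polynomial.pairwise_coprime_X_sub_C Function.injective_id hab).pow
  have hprim : ∀ q : ℂ[X], (∀ a ∈ I, (X - C a)^(μ a) ∣ q) → χ ∣ q := by
    intro q hq
    rw [hsplit]
    exact Finset.prod_dvd_of_coprime hcop hq
  have hex : ∀ a : ℂ, ∃ π : ℂ[X],
      a ∈ I → ((X - C a)^(μ a) ∣ (π - 1)) ∧ ∀ b ∈ I, b ≠ a → (X - C b)^(μ b) ∣ π := by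
    intro a
    by_cases ha : a ∈ I
    · have hcop2 : IsCoprime ((X - C a)^(μ a)) (∏ b ∈ I.erase a, (X - C b)^(μ b)) := by
        refine IsCoprime.prod_right fun b hb => ?_
        have hba : a ≠ b := (Finset.ne_of_mem_erase hb).symm
        exact (Polynomial.pairwise_coprime_X_sub_C Function.injective_id hba).pow
      obtain ⟨u, v, huv⟩ := hcop2
      refine ⟨v * ∏ b ∈ I.erase a, (X - C b)^(μ b), fun _ => ⟨⟨-u, by linear_combination huv⟩, ?_⟩⟩
      intro b hb hba
      exact Dvd.dvd.mul_left (Finset.dvd_prod_of_mem _ (Finset.mem_erase.mpr ⟨hba, hb⟩)) v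
    · exact ⟨0, fun h => absurd h ha⟩
  choose π hπ using hex
  have hπ1 : ∀ a ∈ I, (X - C a)^(μ a) ∣ (π a - 1) := fun a ha => (hπ a ha).1
  have hπa : ∀ a ∈ I, ∀ c ∈ I, c ≠ a → (X - C c)^(μ c) ∣ π a := fun a ha c hc hca =>
    (hπ a ha).2 c hc hca
  have hidem : ∀ a ∈ I, χ ∣ (π a * π a - π a) := by
    intro a ha
    refine hprim _ fun c hc => ?_
    have heq : π a * π a - π a = (π a - 1) * π a := by ring
    rw [heq]
    by_cases hca : c = a
    · subst hca
      exact Dvd.dvd.mul_right (hπ1 c hc) _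
    · exact Dvd.dvd.mul_left (hπa a ha c hc hca) _
  have hpowπ : ∀ a ∈ I, ∀ j : ℕ, χ ∣ ((π a)^(j+1) - π a) := by
    intro a ha j
    induction j with
    | zero => simpa using dvd_zero χ
    | succ j ih =>
      have heq : (π a)^(j+1+1) - π a = π a * ((π a)^(j+1) - π a) + (π a * π a - π a) := by ring
      rw [heq]
      exact dvd_add (Dvd.dvd.mul_left ih _) (hidem a ha)
  have hsum1 : χ ∣ ((∑ a ∈ I, π a) - 1) := by
    refine hprim _ fun c hc => ?_
    have heq : (∑ a ∈ I, π a) - 1 = (π c - 1) + ∑ a ∈ I.erase c, π a := by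
      rw [← Finset.add_sum_erase I π hc]; ring
    rw [heq]
    refine dvd_add (hπ1 c hc) (Finset.dvd_sum fun b hb => ?_)
    exact hπa b (Finset.mem_of_mem_erase hb) c hc (Finset.ne_of_mem_erase hb).symm
  set NP : ℂ → ℂ[X] := fun a => C a⁻¹ * (X - C a) with hNP
  set dd : ℂ → ℕ := fun a => μ a - 1 with hdd
  have hμpos : ∀ a ∈ I, dd a + 1 = μ a := by
    intro a ha
    have hpos : 0 < μ a := (Polynomial.rootMultiplicity_pos hne).mpr
      (isRoot_of_mem_roots (Multiset.mem_toFinset.mp ha))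
    simp only [hdd]
    omega
  set pa : ℂ → ℂ[X] := fun a => C (Complex.log a) + (Lp (dd a)).comp (NP a) with hpa
  set p : ℂ[X] := ∑ a ∈ I, pa a * π a with hp
  -- main block identity
  have hblock : ∀ a ∈ I, NormedSpace.exp (aeval M p) * aeval M (π a) = M * aeval M (π a) := by
    intro a ha
    -- (i)
    have hi : χ ∣ (p * π a - pa a * π a) := by
      have heq : p * π a - pa a * π a =
          pa a * (π a * π a - π a) + (∑ b ∈ I.erase a, pa b * π b) * π a := by
        rw [hp, ← Finset.add_sum_erase I (fun b => pa b * π b) ha]; ring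
      rw [heq]
      refine dvd_add (Dvd.dvd.mul_left (hidem a ha) _) ?_
      rw [Finset.sum_mul]
      refine Finset.dvd_sum fun b hb => ?_
      have hbI := Finset.mem_of_mem_erase hb
      have hba : b ≠ a := Finset.ne_of_mem_erase hb
      refine hprim _ fun c hc => ?_
      by_cases hcb : c = b
      · have hca : c ≠ a := by rw [hcb]; exact hba
        have heq2 : pa b * π b * π a = (pa b * π b) * π a := by ring
        rw [heq2]
        exact Dvd.dvd.mul_left (hπa a ha c hc hca) _
      · have heq2 : pa b * π b * π a = (pa b * π a) * π b := by ring
        rw [heq2]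
        exact Dvd.dvd.mul_left (hπa b hbI c hc hcb) _
    have hstep1 : NormedSpace.exp (aeval M p) * aeval M (π a)
        = NormedSpace.exp (aeval M (pa a)) * aeval M (π a) := by
      refine exp_aeval_mul_aeval M p (pa a) (π a) ?_
      rw [← map_mul, ← map_mul]
      exact aeval_eq_of_dvd M hi
    have hiii : χ ∣ (NP a * π a)^(μ a) := by
      have hapow : (NP a * π a)^(μ a) = (C a⁻¹)^(μ a) * ((X - C a)^(μ a) * (π a)^(μ a)) := by
        have hNPpow : NP a ^ (μ a) = (C a⁻¹)^(μ a) * (X - C a)^(μ a) := by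
          simp only [hNP]; exact mul_pow _ _ _
        rw [mul_pow, hNPpow, mul_assoc]
      rw [hapow]
      refine Dvd.dvd.mul_left ?_ _
      have heq : (X - C a)^(μ a) * (π a)^(μ a)
          = (X - C a)^(μ a) * ((π a)^(μ a) - π a) + (X - C a)^(μ a) * π a := by ring
      rw [heq]
      refine dvd_add (Dvd.dvd.mul_left ?_ _) (hprim _ fun c hc => ?_)
      · have h2 := hpowπ a ha (dd a)
        rwa [hμpos a ha] at h2
      · by_cases hca : c = a
        · subst hca; exact Dvd.dvd.mul_right dvd_rfl _
        · exact Dvd.dvd.mul_left (hπa a ha c hc hca) _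
    have hAa : (aeval M (NP a * π a))^(dd a + 1) = 0 := by
      rw [← map_pow, hμpos a ha]
      exact aeval_zero_of_dvd M hiii
    have hii : χ ∣ ((Lp (dd a)).comp (NP a) - (Lp (dd a)).comp (NP a * π a)) * π a := by
      rw [comp_eq_aeval, comp_eq_aeval, Lp_expand, map_sum, map_sum, ← Finset.sum_sub_distrib,
        Finset.sum_mul]
      refine Finset.dvd_sum fun k _ => ?_
      rw [map_mul, map_mul, map_pow, map_pow, aeval_X, aeval_X, aeval_C, aeval_C]
      have hmp : (NP a * π a)^(k+1) = (NP a)^(k+1) * (π a)^(k+1) := mul_pow _ _ _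
      rw [hmp]
      have heq : (algebraMap ℂ ℂ[X] ((-1)^k/(k+1)) * (NP a)^(k+1)
          - algebraMap ℂ ℂ[X] ((-1)^k/(k+1)) * ((NP a)^(k+1) * (π a)^(k+1))) * π a
          = (-(algebraMap ℂ ℂ[X] ((-1)^k/(k+1)) * (NP a)^(k+1))) * ((π a)^(k+1+1) - π a) := by
        ring
      rw [heq]
      exact Dvd.dvd.mul_left (hpowπ a ha (k+1)) _
    have hstep2 : NormedSpace.exp (aeval M ((Lp (dd a)).comp (NP a))) * aeval M (π a)
        = (1 + aeval M (NP a * π a)) * aeval M (π a) := by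
      have h1 : NormedSpace.exp (aeval M ((Lp (dd a)).comp (NP a))) * aeval M (π a)
          = NormedSpace.exp (aeval M ((Lp (dd a)).comp (NP a * π a))) * aeval M (π a) := by
        refine exp_aeval_mul_aeval M _ _ _ ?_
        rw [← map_mul, ← map_mul]
        exact aeval_eq_of_dvd M (by rw [← sub_mul]; exact hii)
      rw [h1, aeval_comp, exp_aeval_Lp _ _ hAa]
    have hsplitpa : aeval M (pa a)
        = algebraMap ℂ (Matrix (Fin N) (Fin N) ℂ) (Complex.log a)
          + aeval M ((Lp (dd a)).comp (NP a)) := by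
      simp only [hpa]
      rw [map_add, aeval_C]
    have hexp_pa : NormedSpace.exp (aeval M (pa a))
        = algebraMap ℂ (Matrix (Fin N) (Fin N) ℂ) a
          * NormedSpace.exp (aeval M ((Lp (dd a)).comp (NP a))) := by
      rw [hsplitpa, Matrix.exp_add_of_commute _ _ (Algebra.commute_algebraMap_left _ _)]
      congr 1
      erw [← NormedSpace.algebraMap_exp_comm, ← Complex.exp_eq_exp_ℂ,
        Complex.exp_log (hroot0 a ha)]
    have hCaNP : C a * NP a = X - C a := by
      rw [hNP]
      simp only
      rw [← mul_assoc, ← C_mul, mul_inv_cancel₀ (hroot0 a ha), C_1, one_mul]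
    have hiv : χ ∣ (C a * ((1 + NP a * π a) * π a) - X * π a) := by
      have heq : C a * ((1 + NP a * π a) * π a) - X * π a
          = (X - C a) * (π a * π a - π a) + (π a * π a) * (C a * NP a - (X - C a)) := by ring
      rw [heq, hCaNP, sub_self, mul_zero, add_zero]
      exact Dvd.dvd.mul_left (hidem a ha) _
    calc NormedSpace.exp (aeval M p) * aeval M (π a)
        = NormedSpace.exp (aeval M (pa a)) * aeval M (π a) := hstep1
      _ = algebraMap ℂ (Matrix (Fin N) (Fin N) ℂ) a
          * (NormedSpace.exp (aeval M ((Lp (dd a)).comp (NP a))) * aeval M (π a)) := by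
          rw [hexp_pa, mul_assoc]
      _ = algebraMap ℂ (Matrix (Fin N) (Fin N) ℂ) a
          * ((1 + aeval M (NP a * π a)) * aeval M (π a)) := by rw [hstep2]
      _ = aeval M (C a * ((1 + NP a * π a) * π a)) := by
          simp only [map_mul, map_add, map_one, aeval_C]
      _ = aeval M (X * π a) := aeval_eq_of_dvd M hiv
      _ = M * aeval M (π a) := by rw [map_mul, aeval_X]
  have hone : aeval M (∑ a ∈ I, π a) = 1 := by
    have h2 := aeval_eq_of_dvd M hsum1
    rwa [map_one] at h2
  clear_value p
  refine ⟨p, ?_⟩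
  calc NormedSpace.exp (aeval M p)
      = NormedSpace.exp (aeval M p) * aeval M (∑ a ∈ I, π a) := by rw [hone, mul_one]
    _ = ∑ a ∈ I, NormedSpace.exp (aeval M p) * aeval M (π a) := by
        rw [map_sum, Finset.mul_sum]
    _ = ∑ a ∈ I, M * aeval M (π a) := Finset.sum_congr rfl hblock
    _ = M * aeval M (∑ a ∈ I, π a) := by rw [map_sum, Finset.mul_sum]
    _ = M := by rw [hone, mul_one]



lemma commute_aeval {N : ℕ} {A B : Matrix (Fin N) (Fin N) ℂ} (h : Commute A B) (f g : ℂ[X]) :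
    Commute (aeval A f) (aeval B g) := by
  rw [Polynomial.aeval_eq_sum_range (p := f), Polynomial.aeval_eq_sum_range (p := g)]
  refine Commute.sum_left _ _ _ fun i _ => Commute.sum_right _ _ _ fun j _ => ?_
  exact ((h.pow_pow i j).smul_left _).smul_right _

end Stmt2Aux

/-- any finite collection of pairwise commuting invertible matrices
`M₁, …, M_k` admits pairwise commuting matrices `A₁, …, A_k` with `exp(2πi Aⱼ) = Mⱼ`. -/
theorem stmt2 (n k : ℕ) (M : Fin k → Matrix (Fin n) (Fin n) ℂ)
    (hinv : ∀ j, IsUnit (M j)) (hcomm : ∀ i j, Commute (M i) (M j)) :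
    ∃ A : Fin k → Matrix (Fin n) (Fin n) ℂ,
      (∀ i j, Commute (A i) (A j)) ∧
      ∀ j, NormedSpace.exp ((2 * (Real.pi : ℂ) * Complex.I) • A j) = M j := by
  have h := fun j => Stmt2Aux.exists_exp_aeval (M j) (hinv j)
  choose p hp using h
  have hc0 : (2 * (Real.pi : ℂ) * Complex.I) ≠ 0 :=
    mul_ne_zero (mul_ne_zero two_ne_zero (Complex.ofReal_ne_zero.mpr Real.pi_ne_zero))
      Complex.I_ne_zero
  refine ⟨fun j => (2 * (Real.pi : ℂ) * Complex.I)⁻¹ • Polynomial.aeval (M j) (p j), ?_, ?_⟩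
  · intro i j
    exact ((Stmt2Aux.commute_aeval (hcomm i j) (p i) (p j)).smul_left _).smul_right _
  · intro j
    rw [smul_smul, mul_inv_cancel₀ hc0, one_smul]
    exact hp j
end
end

section
/- Let ξ = Σᵢ cᵢ(t) dtᵢ be a holomorphic 1-form on an open set U ⊆ ℂ^m such that c₁ is nonvanishing at a point a ∈ U. Then any holomorphic k-form ω with k < m satisfying ω ∧ ξ = 0 is divisible by ξ near a: there exists a (k−1)-form θ holomorphic at a with ω = θ ∧ ξ. -/
open scoped BigOperators

noncomputable section

section AuxSection

open Equiv Equiv.Perm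

namespace DeRhamAux

variable {n : ℕ}

def castSuccNeLast : Fin n ≃ {x : Fin (n+1) // x ≠ Fin.last n} where
  toFun a := ⟨a.castSucc, (Fin.castSucc_lt_last a).ne⟩
  invFun x := x.1.castPred x.2
  left_inv a := by simp
  right_inv x := by simp [Fin.castSucc_castPred]

def extLast (e : Perm (Fin n)) : Perm (Fin (n+1)) := e.extendDomain castSuccNeLast

lemma extLast_castSucc (e : Perm (Fin n)) (a : Fin n) :
    extLast e a.castSucc = (e a).castSucc := by
  have := e.extendDomain_apply_image castSuccNeLast a
  exact this

lemma extLast_last (e : Perm (Fin n)) : extLast e (Fin.last n) = Fin.last n :=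
  e.extendDomain_apply_not_subtype castSuccNeLast (by simp)

lemma sign_extLast (e : Perm (Fin n)) : sign (extLast e) = sign e :=
  sign_extendDomain e castSuccNeLast

def insLast (j : Fin (n+1)) : Perm (Fin (n+1)) :=
  (finRotate (n+1)).trans j.cycleRange.symm

lemma insLast_last (j : Fin (n+1)) : insLast j (Fin.last n) = j := by
  simp [insLast, finRotate_last]

lemma insLast_castSucc (j : Fin (n+1)) (a : Fin n) :
    insLast j a.castSucc = j.succAbove a := by
  simp [insLast, Fin.coeSucc_eq_succ]

lemma sign_insLast (j : Fin (n+1)) : sign (insLast j) = (-1)^(n + (j:ℕ)) := by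
  have : insLast j = j.cycleRange.symm * finRotate (n+1) := rfl
  rw [this, map_mul, sign_symm, Fin.sign_cycleRange, sign_finRotate, pow_add, mul_comm, Nat.add_sub_cancel]

def Phi (p : Fin (n+1) × Perm (Fin n)) : Perm (Fin (n+1)) :=
  (extLast p.2).trans (insLast p.1)

lemma Phi_last (p) : Phi (n := n) p (Fin.last n) = p.1 := by
  simp [Phi, extLast_last, insLast_last]

lemma Phi_castSucc (p) (a : Fin n) :
    Phi (n := n) p a.castSucc = p.1.succAbove (p.2 a) := by
  simp [Phi, extLast_castSucc, insLast_castSucc]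

lemma sign_Phi (p) : sign (Phi (n := n) p) = (-1)^(n + (p.1:ℕ)) * sign p.2 := by
  have : Phi p = insLast p.1 * extLast p.2 := rfl
  rw [this, map_mul, sign_insLast, sign_extLast]

lemma Phi_bijective : Function.Bijective (Phi (n := n)) := by
  rw [Fintype.bijective_iff_injective_and_card]
  constructor
  · rintro ⟨j, e⟩ ⟨j', e'⟩ h
    have hj : j = j' := by
      have := congrArg (fun σ : Perm (Fin (n+1)) => σ (Fin.last n)) h
      simpa [Phi_last] using this
    subst hj
    have he : e = e' := by
      ext a
      have := congrArg (fun σ : Perm (Fin (n+1)) => σ a.castSucc) h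
      simp only [Phi_castSucc] at this
      exact congrArg Fin.val (Fin.succAbove_right_injective this)
    rw [he]
  · simp [Fintype.card_perm, Nat.factorial_succ]

end DeRhamAux

end AuxSection

open Equiv in
open DeRhamAux in
/-- A wedge of an alternating `(k+1)`-form with a `1`-form, expressed
as a signed sum over omitted indices. -/
lemma wedge_one_eq {m k : ℕ} (ξ : Form m 1) (ω : Form m (k+1)) (x : Pt m)
    (hAlt : ∀ idx : Fin (k+1) → Fin m, ∀ σ : Perm (Fin (k+1)),
      ω x (idx ∘ σ) = ((Equiv.Perm.sign σ : ℤ) : ℂ) * ω x idx)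
    (v : Fin (k+2) → Fin m) :
    Form.wedge ω ξ x v =
      ∑ j : Fin (k+2), (-1:ℂ)^(k+1+(j:ℕ)) * ξ x (fun _ => v j) * ω x (v ∘ j.succAbove) := by
  have key : ∀ (j : Fin (k+2)) (e : Perm (Fin (k+1))),
      ((Equiv.Perm.sign (Phi (j,e)) : ℤ) : ℂ) *
        (ω x fun a => v (Phi (j,e) (Fin.castAdd 1 a))) *
        (ξ x fun b => v (Phi (j,e) (Fin.natAdd (k+1) b)))
      = (-1:ℂ)^(k+1+(j:ℕ)) * ξ x (fun _ => v j) * ω x (v ∘ j.succAbove) := by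
    intro j e
    have h1 : (fun a => v (Phi (j,e) (Fin.castAdd 1 a))) = (v ∘ j.succAbove) ∘ ⇑e := by
      funext a
      show v (Phi (j,e) a.castSucc) = _
      rw [Phi_castSucc]
      rfl
    have h2 : (fun b : Fin 1 => v (Phi (j,e) (Fin.natAdd (k+1) b))) = fun _ => v j := by
      funext b
      have hb : Fin.natAdd (k+1) b = Fin.last (k+1) := by
        have := b.isLt
        apply Fin.ext
        simp only [Fin.coe_natAdd, Fin.val_last]
        omega
      rw [hb, Phi_last]
    have hs : ((Equiv.Perm.sign (Phi (j,e)) : ℤ) : ℂ)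
        = (-1:ℂ)^(k+1+(j:ℕ)) * ((Equiv.Perm.sign e : ℤ) : ℂ) := by
      rw [sign_Phi]
      push_cast
      ring
    have hss : ((Equiv.Perm.sign e : ℤ) : ℂ) * ((Equiv.Perm.sign e : ℤ) : ℂ) = 1 := by
      rcases Int.units_eq_one_or (Equiv.Perm.sign e) with h | h <;> simp [h]
    rw [h1, h2, hAlt, hs]
    linear_combination ((-1:ℂ)^(k+1+(j:ℕ)) * ξ x (fun _ => v j) * ω x (v ∘ j.succAbove)) * hss
  have reindex : (∑ σ : Perm (Fin (k+1+1)),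
        ((Equiv.Perm.sign σ : ℤ) : ℂ) *
          (ω x fun a => v (σ (Fin.castAdd 1 a))) *
          (ξ x fun b => v (σ (Fin.natAdd (k+1) b))))
      = ∑ p : Fin (k+2) × Perm (Fin (k+1)),
        ((Equiv.Perm.sign (Phi p) : ℤ) : ℂ) *
          (ω x fun a => v (Phi p (Fin.castAdd 1 a))) *
          (ξ x fun b => v (Phi p (Fin.natAdd (k+1) b))) :=
    (Fintype.sum_bijective (Phi (n := k+1)) Phi_bijective
      (fun p => ((Equiv.Perm.sign (Phi p) : ℤ) : ℂ) *
          (ω x fun a => v (Phi p (Fin.castAdd 1 a))) *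
          (ξ x fun b => v (Phi p (Fin.natAdd (k+1) b))))
      (fun σ => ((Equiv.Perm.sign σ : ℤ) : ℂ) *
          (ω x fun a => v (σ (Fin.castAdd 1 a))) *
          (ξ x fun b => v (σ (Fin.natAdd (k+1) b))))
      (fun p => rfl)).symm
  unfold Form.wedge
  rw [reindex, Fintype.sum_prod_type]
  have inner : ∀ j : Fin (k+2), (∑ e : Perm (Fin (k+1)),
      ((Equiv.Perm.sign (Phi (j,e)) : ℤ) : ℂ) *
        (ω x fun a => v (Phi (j,e) (Fin.castAdd 1 a))) *
        (ξ x fun b => v (Phi (j,e) (Fin.natAdd (k+1) b))))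
      = ((k+1).factorial : ℂ) *
        ((-1:ℂ)^(k+1+(j:ℕ)) * ξ x (fun _ => v j) * ω x (v ∘ j.succAbove)) := by
    intro j
    rw [Finset.sum_congr rfl fun e _ => key j e]
    simp [Finset.sum_const, Fintype.card_perm, mul_assoc]
  rw [Finset.sum_congr rfl fun j _ => inner j, ← Finset.mul_sum, ← mul_assoc]
  have hfac : ((((k+1).factorial : ℕ) : ℂ) * ((Nat.factorial 1 : ℕ) : ℂ))⁻¹ *
      ((k+1).factorial : ℂ) = 1 := by
    rw [Nat.factorial_one]
    push_cast
    rw [mul_one]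
    exact inv_mul_cancel₀ (by exact_mod_cast Nat.factorial_ne_zero (k+1))
  rw [hfac, one_mul]

/-- de Rham division lemma: if `ξ = Σ cᵢ dtᵢ` is a holomorphic 1-form on
`U ⊆ ℂ^m` with `c₁(a) ≠ 0`, then any holomorphic (alternating) `k`-form `ω`, `k < m`,
with `ω ∧ ξ = 0` on `U` is divisible by `ξ` near `a`, with holomorphic ratio `θ`. -/
theorem stmt4 (m k : ℕ) (hkm : k + 1 < m) (U : Set (Pt m)) (hU : IsOpen U)
    (a : Pt m) (ha : a ∈ U)
    (ξ : Form m 1) (hξ : Form.IsHolomorphicOn ξ U)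
    (hc1 : ξ a (fun _ => (⟨0, by omega⟩ : Fin m)) ≠ 0)
    (ω : Form m (k + 1)) (hω : Form.IsHolomorphicOn ω U)
    (hAlt : ∀ x, ∀ idx : Fin (k + 1) → Fin m, ∀ σ : Equiv.Perm (Fin (k + 1)),
      ω x (idx ∘ σ) = ((Equiv.Perm.sign σ : ℤ) : ℂ) * ω x idx)
    (hdiv : ∀ x ∈ U, ∀ idx, Form.wedge ω ξ x idx = 0) :
    ∃ V : Set (Pt m), IsOpen V ∧ a ∈ V ∧ V ⊆ U ∧
      ∃ θ : Form m k, Form.IsHolomorphicOn θ V ∧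
        ∀ x ∈ V, ∀ idx, ω x idx = Form.wedgeOne θ ξ x idx := by
  classical
  set i0 : Fin m := (⟨0, by omega⟩ : Fin m) with hi0
  set c0 : Pt m → ℂ := fun x => ξ x (fun _ => i0) with hc0def
  have hc0diff : DifferentiableOn ℂ c0 U := hξ _
  set V := U ∩ c0 ⁻¹' {(0:ℂ)}ᶜ with hVdef
  have hVopen : IsOpen V :=
    hc0diff.continuousOn.isOpen_inter_preimage hU isOpen_compl_singleton
  have hVU : V ⊆ U := Set.inter_subset_left
  have haV : a ∈ V := ⟨ha, hc1⟩
  refine ⟨V, hVopen, haV, hVU, ?_⟩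
  refine ⟨fun x idx => (-1:ℂ)^k * ((c0 x)⁻¹ * ω x (Fin.cons i0 idx)), ?_, ?_⟩
  · intro idx
    show DifferentiableOn ℂ (fun x => (-1:ℂ)^k * ((c0 x)⁻¹ * ω x (Fin.cons i0 idx))) V
    apply DifferentiableOn.const_mul
    apply DifferentiableOn.mul
    · apply DifferentiableOn.inv (hc0diff.mono hVU)
      intro x hx
      exact hx.2
    · exact (hω _).mono hVU
  · intro x hx idx
    have hxU : x ∈ U := hVU hx
    have hx0 : c0 x ≠ 0 := hx.2
    set w : Fin (k+2) → Fin m := Fin.cons i0 idx with hw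
    have h1 : ∑ j : Fin (k+2), (-1:ℂ)^(k+1+(j:ℕ)) * ξ x (fun _ => w j) *
        ω x (w ∘ j.succAbove) = 0 := by
      rw [← wedge_one_eq ξ ω x (hAlt x) w]
      exact hdiv x hxU _
    have hh : ((-1:ℂ)^(k+1)) * ((-1:ℂ)^(k+1)) = 1 := by
      rw [← pow_add]
      exact Even.neg_one_pow ⟨k+1, by ring⟩
    have h2 : ∑ j : Fin (k+2), (-1:ℂ)^((j:ℕ)) * ξ x (fun _ => w j) *
        ω x (w ∘ j.succAbove) = 0 := by
      have step : ∑ j : Fin (k+2), (-1:ℂ)^((j:ℕ)) * ξ x (fun _ => w j) *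
          ω x (w ∘ j.succAbove)
          = (-1:ℂ)^(k+1) * ∑ j : Fin (k+2), (-1:ℂ)^(k+1+(j:ℕ)) *
            ξ x (fun _ => w j) * ω x (w ∘ j.succAbove) := by
        rw [Finset.mul_sum]
        refine Finset.sum_congr rfl fun j _ => ?_
        linear_combination (-((-1:ℂ)^((j:ℕ)) * ξ x (fun _ => w j) *
          ω x (w ∘ j.succAbove))) * hh
      rw [step, h1, mul_zero]
    rw [Fin.sum_univ_succ] at h2
    have e0 : (fun _ : Fin 1 => w (0 : Fin (k+2))) = fun _ => i0 := by
      funext b; rw [hw]; simp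
    have f0 : w ∘ (0 : Fin (k+2)).succAbove = idx := by
      funext b
      rw [hw]
      simp [Fin.succAbove_zero]
    have esucc : ∀ i : Fin (k+1),
        (fun _ : Fin 1 => w (Fin.succ i)) = fun _ => idx i := by
      intro i; funext b; rw [hw]; simp
    have fsucc : ∀ i : Fin (k+1),
        w ∘ (Fin.succ i).succAbove = Fin.cons i0 (idx ∘ i.succAbove) := by
      intro i
      funext b
      rw [hw]
      cases b using Fin.cases with
      | zero => simp
      | succ c => simp [Fin.succ_succAbove_succ]
    rw [e0, f0] at h2
    simp only [esucc, fsucc, Fin.val_zero, pow_zero, one_mul, Fin.val_succ] at h2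
    have expand : ∑ i : Fin (k+1), (-1:ℂ)^((i:ℕ)+1) * ξ x (fun _ => idx i) *
        ω x (Fin.cons i0 (idx ∘ i.succAbove))
        = - ∑ i : Fin (k+1), (-1:ℂ)^((i:ℕ)) * ξ x (fun _ => idx i) *
          ω x (Fin.cons i0 (idx ∘ i.succAbove)) := by
      rw [← Finset.sum_neg_distrib]
      refine Finset.sum_congr rfl fun i _ => ?_
      ring
    rw [expand] at h2
    have hS : c0 x * ω x idx
        = ∑ i : Fin (k+1), (-1:ℂ)^((i:ℕ)) * ξ x (fun _ => idx i) *
            ω x (Fin.cons i0 (idx ∘ i.succAbove)) := by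
      linear_combination h2
    have hk2 : ((-1:ℂ)^k) * ((-1:ℂ)^k) = 1 := by
      rw [← pow_add]
      exact Even.neg_one_pow ⟨k, by ring⟩
    have goal2 : Form.wedgeOne
        (fun x idx => (-1:ℂ)^k * ((c0 x)⁻¹ * ω x (Fin.cons i0 idx))) ξ x idx
        = (c0 x)⁻¹ * (c0 x * ω x idx) := by
      rw [hS]
      unfold Form.wedgeOne Form.oneWedge
      rw [Finset.mul_sum, Finset.mul_sum]
      refine Finset.sum_congr rfl fun j _ => ?_
      show (-1:ℂ)^k * ((-1:ℂ)^((j:ℕ)) * ξ x (fun _ => idx j) *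
          ((-1:ℂ)^k * ((c0 x)⁻¹ * ω x (Fin.cons i0 (fun a => idx (j.succAbove a))))))
        = (c0 x)⁻¹ * ((-1:ℂ)^((j:ℕ)) * ξ x (fun _ => idx j) *
            ω x (Fin.cons i0 (idx ∘ j.succAbove)))
      have hco : (fun a => idx (j.succAbove a)) = idx ∘ j.succAbove := rfl
      rw [hco]
      linear_combination ((-1:ℂ)^((j:ℕ)) * ξ x (fun _ => idx j) * (c0 x)⁻¹ *
        ω x (Fin.cons i0 (idx ∘ j.succAbove))) * hk2
    rw [goal2, ← mul_assoc, inv_mul_cancel₀ hx0, one_mul]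
end
end

section
/- Consider Ω = Σ_{j=1}^k Aⱼ(λ) df_j/f_j on ℂ¹ × ℂ^k with f_j(z,λ) = z − λ_j, where the matrix functions Aⱼ depend only on λ = (λ₁,…,λ_k) and Σⱼ Aⱼ(λ) ≡ 0. Then Ω is flat (dΩ = Ω ∧ Ω) if and only if the Aⱼ satisfy the Schlesinger equations dA_s = − Σ_{j ≠ s} [A_s, A_j] (dλ_s − dλ_j)/(λ_s − λ_j) for all s. -/
open scoped BigOperators

noncomputable section

namespace Stmt15Aux
open Finset Filter Topology

variable {k : ℕ}

def dd (j : Fin k) (w : Fin (k + 1)) : ℂ :=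
  (if w = 0 then 1 else 0) - (if w = j.succ then 1 else 0)

def gg (L : Fin k → ℂ) (i j : Fin k) (w : Fin (k + 1)) : ℂ :=
  ((if w = i.succ then 1 else 0) - (if w = j.succ then 1 else 0)) / (L i - L j)

lemma gg_symm (L : Fin k → ℂ) (i j : Fin k) (w : Fin (k + 1)) :
    gg L j i w = gg L i j w := by
  rw [gg, gg, ← neg_div_neg_eq]
  ring_nf

lemma dd_zero (j : Fin k) : dd j (0 : Fin (k+1)) = 1 := by
  simp [dd, (Fin.succ_ne_zero j).symm]

lemma dd_succ (j t : Fin k) : dd j t.succ = -(if t = j then 1 else 0) := by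
  simp [dd, Fin.succ_ne_zero, Fin.succ_inj]

lemma claimX (a b e h fj ft : ℂ) (h1 : fj ≠ 0) (h2 : ft ≠ 0) (h3 : ft ≠ fj) :
    ((h - b)/(ft - fj)) * (a/fj - e/ft) - ((e - a)/(ft - fj)) * (b/fj - h/ft)
      = (a/fj)*(h/ft) - (b/fj)*(e/ft) := by
  have h4 : ft - fj ≠ 0 := sub_ne_zero.2 h3
  field_simp
  ring

lemma pair_identity (L : Fin k → ℂ) (z : ℂ) (i j : Fin k) (hij : L i ≠ L j)
    (hzi : z ≠ L i) (hzj : z ≠ L j) (u v : Fin (k + 1)) :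
    gg L i j v * (dd i u/(z - L i) - dd j u/(z - L j))
      - gg L i j u * (dd i v/(z - L i) - dd j v/(z - L j))
    = (dd i u/(z - L i)) * (dd j v/(z - L j)) - (dd i v/(z - L i)) * (dd j u/(z - L j)) := by
  have h1 : z - L i ≠ 0 := sub_ne_zero.2 hzi
  have h2 : z - L j ≠ 0 := sub_ne_zero.2 hzj
  have h3 : (z - L j) - (z - L i) = L i - L j := by ring
  have h4 : (z - L j) ≠ (z - L i) := by
    rw [← sub_ne_zero, h3]; exact sub_ne_zero.2 hij
  have hnum : ∀ w, ((if w = i.succ then (1:ℂ) else 0) - (if w = j.succ then 1 else 0))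
      = dd j w - dd i w := by intro w; simp only [dd]; ring
  rw [gg, gg, hnum u, hnum v, ← h3]
  exact claimX (dd i u) (dd i v) (dd j u) (dd j v) _ _ h1 h2 h4

lemma key_scalar (L : Fin k → ℂ) (z : ℂ)
    (hL : ∀ i j : Fin k, i ≠ j → L i ≠ L j) (hz : ∀ j, z ≠ L j)
    (E : Fin k → Fin (k + 1) → ℂ) (M : Fin k → Fin k → ℂ) (u v : Fin (k + 1))
    (hSch : ∀ s w, E s w = -∑ j ∈ Finset.univ \ {s}, (M s j - M j s) * gg L s j w) :
    ∑ j, (E j u * (dd j v / (z - L j)) - E j v * (dd j u / (z - L j)))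
      = ∑ i, ∑ j, M i j *
          ((dd i u / (z - L i)) * (dd j v / (z - L j))
            - (dd i v / (z - L i)) * (dd j u / (z - L j))) := by
  have hE : ∀ s w, E s w = -∑ j, (M s j - M j s) * gg L s j w := by
    intro s w
    rw [hSch s w]
    congr 1
    refine Finset.sum_subset (Finset.subset_univ _) ?_
    intro j _ hj
    have : j = s := by simpa [Finset.mem_sdiff] using hj
    simp [this]
  have hL1 : (∑ j, (E j u * (dd j v / (z - L j)) - E j v * (dd j u / (z - L j))))
      = ∑ j, ∑ t, (M j t - M t j) *
          (gg L j t v * (dd j u / (z - L j)) - gg L j t u * (dd j v / (z - L j))) := by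
    refine Finset.sum_congr rfl fun j _ => ?_
    rw [hE j u, hE j v, neg_mul, neg_mul, neg_sub_neg, Finset.sum_mul, Finset.sum_mul,
      ← Finset.sum_sub_distrib]
    exact Finset.sum_congr rfl fun t _ => by ring
  rw [hL1]
  -- 2 * LHS' = 2 * RHS
  have swap2 : ∀ F : Fin k → Fin k → ℂ, (∑ i, ∑ j, F i j) = ∑ i, ∑ j, F j i :=
    fun F => Finset.sum_comm
  refine mul_left_cancel₀ (two_ne_zero (α := ℂ)) ?_
  have h2L : (2:ℂ) * (∑ j, ∑ t, (M j t - M t j) *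
        (gg L j t v * (dd j u / (z - L j)) - gg L j t u * (dd j v / (z - L j))))
      = ∑ j, ∑ t, (M j t - M t j) *
          ((dd j u / (z - L j)) * (dd t v / (z - L t))
            - (dd j v / (z - L j)) * (dd t u / (z - L t))) := by
    rw [two_mul]
    nth_rewrite 2 [swap2 (fun j t => (M j t - M t j) *
        (gg L j t v * (dd j u / (z - L j)) - gg L j t u * (dd j v / (z - L j))))]
    rw [← Finset.sum_add_distrib]
    refine Finset.sum_congr rfl fun j _ => ?_
    rw [← Finset.sum_add_distrib]
    refine Finset.sum_congr rfl fun t _ => ?_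
    rcases eq_or_ne j t with rfl | hjt
    · ring
    · have hp := pair_identity L z j t (hL j t hjt) (hz j) (hz t) u v
      rw [gg_symm L j t u, gg_symm L j t v]
      linear_combination (M j t - M t j) * hp
  have h2R : (2:ℂ) * (∑ i, ∑ j, M i j *
        ((dd i u / (z - L i)) * (dd j v / (z - L j))
          - (dd i v / (z - L i)) * (dd j u / (z - L j))))
      = ∑ j, ∑ t, (M j t - M t j) *
          ((dd j u / (z - L j)) * (dd t v / (z - L t))
            - (dd j v / (z - L j)) * (dd t u / (z - L t))) := by
    rw [two_mul]
    nth_rewrite 2 [swap2 (fun i j => M i j *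
        ((dd i u / (z - L i)) * (dd j v / (z - L j))
          - (dd i v / (z - L i)) * (dd j u / (z - L j))))]
    rw [← Finset.sum_add_distrib]
    refine Finset.sum_congr rfl fun j _ => ?_
    rw [← Finset.sum_add_distrib]
    exact Finset.sum_congr rfl fun t _ => by ring
  rw [h2L, h2R]


lemma key_forward (L : Fin k → ℂ) (hL : ∀ i j : Fin k, i ≠ j → L i ≠ L j)
    (E : Fin k → Fin (k + 1) → ℂ) (M : Fin k → Fin k → ℂ)
    (hE0 : ∀ j, E j 0 = 0)
    (hflat : ∀ z : ℂ, (∀ j, z ≠ L j) → ∀ t : Fin k,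
      ∑ j, E j t.succ / (z - L j)
        = ∑ j, (M j t - M t j) / ((z - L t) * (z - L j)))
    (s : Fin k) (w : Fin (k + 1)) :
    E s w = -∑ j ∈ Finset.univ \ {s}, (M s j - M j s) * gg L s j w := by
  rcases Fin.eq_zero_or_eq_succ w with rfl | ⟨t, rfl⟩
  · rw [hE0]
    have hg : ∀ j : Fin k, gg L s j 0 = 0 := by
      intro j
      simp [gg, (Fin.succ_ne_zero s).symm, (Fin.succ_ne_zero j).symm]
    simp only [hg, mul_zero, Finset.sum_const_zero, neg_zero]
  · -- w = t.succ
    have hgood : ∀ᶠ z in 𝓝[≠] (L s), ∀ j, z ≠ L j := by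
      rw [Filter.eventually_all]
      intro j
      rcases eq_or_ne j s with rfl | hjs
      · exact eventually_mem_nhdsWithin.mono fun z hz => hz
      · exact eventually_ne_nhdsWithin (hL s j hjs.symm)
    have hgg : ∀ j, gg L s j t.succ
        = ((if t = s then 1 else 0) - (if t = j then 1 else 0)) / (L s - L j) := by
      intro j; rw [gg]; simp [Fin.succ_inj]
    have hmem : ∀ j : Fin k, j ≠ s → j ∈ Finset.univ \ ({s} : Finset (Fin k)) := by
      intro j hj; simp [hj]
    have hmem' : ∀ j : Fin k, j ∈ Finset.univ \ ({s} : Finset (Fin k)) → j ≠ s := by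
      intro j hj; simpa using hj
    rcases eq_or_ne s t with rfl | hst
    · -- s = t case
      set G : ℂ → ℂ := fun z => E s s.succ
          + (∑ j ∈ univ \ {s}, E j s.succ * ((z - L s)/(z - L j)))
          - ∑ j ∈ univ \ {s}, (M j s - M s j) / (z - L j) with hGdef
      have hG0 : ∀ᶠ z in 𝓝[≠] (L s), G z = 0 := by
        filter_upwards [hgood, eventually_mem_nhdsWithin] with z hzg hzne
        have hzs : z - L s ≠ 0 := sub_ne_zero.2 hzne
        have hflatz := hflat z hzg s
        have e1 : E s s.succ + (∑ j ∈ univ \ {s}, E j s.succ * ((z - L s)/(z - L j)))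
            = (z - L s) * ∑ j, E j s.succ / (z - L j) := by
          rw [Finset.mul_sum, ← Finset.sum_erase_add _ _ (Finset.mem_univ s), Finset.erase_eq,
            add_comm]
          congr 1
          · exact Finset.sum_congr rfl fun j _ => by ring
          · field_simp
        have e2 : (∑ j ∈ univ \ {s}, (M j s - M s j) / (z - L j))
            = (z - L s) * ∑ j, (M j s - M s j) / ((z - L s) * (z - L j)) := by
          rw [Finset.mul_sum, ← Finset.sum_erase_add _ _ (Finset.mem_univ s), Finset.erase_eq]
          have h0 : (z - L s) * ((M s s - M s s) / ((z - L s) * (z - L s))) = 0 := by simp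
          rw [h0, add_zero]
          refine Finset.sum_congr rfl fun j hj => ?_
          have hzj : z - L j ≠ 0 := sub_ne_zero.2 (hzg j)
          field_simp
        rw [hGdef]
        simp only
        rw [e1, e2, hflatz, sub_self]
      have hGc : Tendsto G (𝓝 (L s)) (𝓝 (G (L s))) := by
        refine Tendsto.sub (Tendsto.add tendsto_const_nhds ?_) ?_
        · refine tendsto_finset_sum _ fun j hj => ?_
          have hne : L s - L j ≠ 0 := sub_ne_zero.2 (hL s j (hmem' j hj).symm)
          have : ContinuousAt (fun z : ℂ => E j s.succ * ((z - L s)/(z - L j))) (L s) :=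
            continuousAt_const.mul ((continuousAt_id.sub continuousAt_const).div
              (continuousAt_id.sub continuousAt_const) hne)
          exact this
        · refine tendsto_finset_sum _ fun j hj => ?_
          have hne : L s - L j ≠ 0 := sub_ne_zero.2 (hL s j (hmem' j hj).symm)
          have : ContinuousAt (fun z : ℂ => (M j s - M s j) / (z - L j)) (L s) :=
            continuousAt_const.div (continuousAt_id.sub continuousAt_const) hne
          exact this
      have hG0' : Tendsto G (𝓝[≠] (L s)) (𝓝 0) :=
        Tendsto.congr' (hG0.mono fun z h => h.symm) tendsto_const_nhds
      have hGval : G (L s) = 0 :=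
        tendsto_nhds_unique (hGc.mono_left nhdsWithin_le_nhds) hG0'
      rw [hGdef] at hGval
      simp only [sub_self, zero_div, mul_zero, Finset.sum_const_zero, add_zero] at hGval
      have hval : E s s.succ = ∑ j ∈ univ \ {s}, (M j s - M s j) / (L s - L j) :=
        sub_eq_zero.1 hGval
      rw [hval]
      have hr : ∀ j ∈ univ \ ({s} : Finset (Fin k)),
          (M s j - M j s) * gg L s j s.succ = -((M j s - M s j) / (L s - L j)) := by
        intro j hj
        rw [hgg j, if_pos rfl, if_neg (fun h => (hmem' j hj) h.symm)]
        ring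
      rw [Finset.sum_congr rfl hr, Finset.sum_neg_distrib, neg_neg]
    · -- s ≠ t case
      set G : ℂ → ℂ := fun z => E s t.succ
          + (∑ j ∈ univ \ {s}, E j t.succ * ((z - L s)/(z - L j)))
          - ((M s t - M t s)/(z - L t)
              + ∑ j ∈ univ \ {s}, (M j t - M t j) * ((z - L s)/((z - L t) * (z - L j)))) with hGdef
      have hG0 : ∀ᶠ z in 𝓝[≠] (L s), G z = 0 := by
        filter_upwards [hgood, eventually_mem_nhdsWithin] with z hzg hzne
        have hzs : z - L s ≠ 0 := sub_ne_zero.2 hzne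
        have hzt : z - L t ≠ 0 := sub_ne_zero.2 (hzg t)
        have hflatz := hflat z hzg t
        have e1 : E s t.succ + (∑ j ∈ univ \ {s}, E j t.succ * ((z - L s)/(z - L j)))
            = (z - L s) * ∑ j, E j t.succ / (z - L j) := by
          rw [Finset.mul_sum, ← Finset.sum_erase_add _ _ (Finset.mem_univ s), Finset.erase_eq,
            add_comm]
          congr 1
          · exact Finset.sum_congr rfl fun j _ => by ring
          · field_simp
        have e2 : (M s t - M t s)/(z - L t)
              + (∑ j ∈ univ \ {s}, (M j t - M t j) * ((z - L s)/((z - L t) * (z - L j))))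
            = (z - L s) * ∑ j, (M j t - M t j) / ((z - L t) * (z - L j)) := by
          rw [Finset.mul_sum, ← Finset.sum_erase_add _ _ (Finset.mem_univ s), Finset.erase_eq,
            add_comm]
          congr 1
          · exact Finset.sum_congr rfl fun j _ => by ring
          · field_simp
        rw [hGdef]
        simp only
        rw [e1, e2, hflatz, sub_self]
      have hGc : Tendsto G (𝓝 (L s)) (𝓝 (G (L s))) := by
        have hnt : L s - L t ≠ 0 := sub_ne_zero.2 (hL s t hst)
        refine Tendsto.sub (Tendsto.add tendsto_const_nhds ?_) (Tendsto.add ?_ ?_)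
        · refine tendsto_finset_sum _ fun j hj => ?_
          have hne : L s - L j ≠ 0 := sub_ne_zero.2 (hL s j (hmem' j hj).symm)
          have : ContinuousAt (fun z : ℂ => E j t.succ * ((z - L s)/(z - L j))) (L s) :=
            continuousAt_const.mul ((continuousAt_id.sub continuousAt_const).div
              (continuousAt_id.sub continuousAt_const) hne)
          exact this
        · have : ContinuousAt (fun z : ℂ => (M s t - M t s)/(z - L t)) (L s) :=
            continuousAt_const.div (continuousAt_id.sub continuousAt_const) hnt
          exact this
        · refine tendsto_finset_sum _ fun j hj => ?_
          have hne : L s - L j ≠ 0 := sub_ne_zero.2 (hL s j (hmem' j hj).symm)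
          have : ContinuousAt
              (fun z : ℂ => (M j t - M t j) * ((z - L s)/((z - L t) * (z - L j)))) (L s) :=
            continuousAt_const.mul ((continuousAt_id.sub continuousAt_const).div
              ((continuousAt_id.sub continuousAt_const).mul
                (continuousAt_id.sub continuousAt_const)) (mul_ne_zero hnt hne))
          exact this
      have hG0' : Tendsto G (𝓝[≠] (L s)) (𝓝 0) :=
        Tendsto.congr' (hG0.mono fun z h => h.symm) tendsto_const_nhds
      have hGval : G (L s) = 0 :=
        tendsto_nhds_unique (hGc.mono_left nhdsWithin_le_nhds) hG0'
      rw [hGdef] at hGval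
      simp only [sub_self, zero_div, mul_zero, Finset.sum_const_zero, add_zero] at hGval
      have hval : E s t.succ = (M s t - M t s) / (L s - L t) := sub_eq_zero.1 hGval
      rw [hval]
      have hr : ∀ j ∈ univ \ ({s} : Finset (Fin k)),
          (M s j - M j s) * gg L s j t.succ
            = (if t = j then -((M s j - M j s) / (L s - L j)) else 0) := by
        intro j hj
        rw [hgg j, if_neg (fun h => hst h.symm)]
        by_cases h : t = j
        · rw [if_pos h, if_pos h]
          ring
        · rw [if_neg h, if_neg h]
          ring
      rw [Finset.sum_congr rfl hr, Finset.sum_ite_eq]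
      rw [if_pos (hmem t (fun h => hst h.symm))]
      ring

lemma perm2 (F : Equiv.Perm (Fin 2) → ℂ) :
    ∑ σ : Equiv.Perm (Fin 2), F σ = F 1 + F (Equiv.swap 0 1) := by
  have h : (Finset.univ : Finset (Equiv.Perm (Fin 2))) = {1, Equiv.swap 0 1} := by decide
  rw [h, Finset.sum_insert (by decide), Finset.sum_singleton]

/-- the projection killing the zeroth coordinate -/
def pr (k : ℕ) : Pt (k + 1) →L[ℂ] Pt (k + 1) :=
  ContinuousLinearMap.pi fun i => if i = 0 then 0 else ContinuousLinearMap.proj i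

lemma pr_apply (y : Pt (k + 1)) (i : Fin (k + 1)) :
    pr k y i = if i = 0 then 0 else y i := by
  rw [pr, ContinuousLinearMap.pi_apply]
  by_cases h : i = 0 <;> simp [h]

lemma pr_succ (y : Pt (k + 1)) (j : Fin k) : pr k y j.succ = y j.succ := by
  rw [pr_apply, if_neg (Fin.succ_ne_zero j)]

lemma pr_single_zero : pr k (Pi.single (0 : Fin (k + 1)) (1 : ℂ)) = 0 := by
  funext i
  rw [pr_apply]
  by_cases h : i = 0
  · simp [h]
  · simp [h, Pi.single_eq_of_ne h]

lemma hUopen : IsOpen {x : Pt (k + 1) | ∀ i j : Fin k, i ≠ j → x i.succ ≠ x j.succ} := by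
  have h : {x : Pt (k + 1) | ∀ i j : Fin k, i ≠ j → x i.succ ≠ x j.succ}
      = ⋂ (i : Fin k), ⋂ (j : Fin k), ⋂ (_ : i ≠ j), {x : Pt (k + 1) | x i.succ ≠ x j.succ} := by
    ext x; simp [Set.mem_iInter]
  rw [h]
  exact isOpen_iInter_of_finite fun i => isOpen_iInter_of_finite fun j =>
    isOpen_iInter_of_finite fun _ => isOpen_ne_fun (continuous_apply _) (continuous_apply _)

lemma single_apply' (v i : Fin (k + 1)) :
    (Pi.single v (1 : ℂ) : Pt (k+1)) i = if v = i then 1 else 0 := by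
  by_cases h : i = v
  · subst h; simp
  · rw [Pi.single_eq_of_ne h, if_neg fun hh => h hh.symm]


def prj (k : ℕ) (i : Fin (k + 1)) : Pt (k + 1) →L[ℂ] ℂ := ContinuousLinearMap.proj i

lemma prj_apply (i : Fin (k + 1)) (y : Pt (k + 1)) : prj k i y = y i := rfl

lemma fderiv_coeff {n : ℕ} (A : Fin k → Pt (k + 1) → Matrix (Fin n) (Fin n) ℂ)
    (p q : Fin n) (x : Pt (k + 1))
    (hdiff : ∀ j : Fin k, DifferentiableAt ℂ (fun y => A j y p q) x)
    (hz : ∀ j : Fin k, x 0 ≠ x j.succ) (w u : Fin (k + 1)) :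
    fderiv ℂ (fun y => ∑ j, A j y p q * (dd j w / (y 0 - y j.succ))) x (Pi.single u 1)
      = ∑ j, (fderiv ℂ (fun y => A j y p q) x (Pi.single u 1) * (dd j w / (x 0 - x j.succ))
          + A j x p q * dd j w * (-((x 0 - x j.succ) ^ 2)⁻¹) * dd j u) := by
  have hne : ∀ j : Fin k, x 0 - x j.succ ≠ 0 := fun j => sub_ne_zero.2 (hz j)
  have H : HasFDerivAt (fun y : Pt (k + 1) => ∑ j, A j y p q * (dd j w * (y 0 - y j.succ)⁻¹))
      (∑ j, (A j x p q • ((dd j w) • ((ContinuousLinearMap.smulRight (1 : ℂ →L[ℂ] ℂ)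
            (-((x 0 - x j.succ) ^ 2)⁻¹)).comp
            (prj k 0 - prj k j.succ)))
        + (dd j w * (x 0 - x j.succ)⁻¹) • fderiv ℂ (fun y => A j y p q) x)) x := by
    refine HasFDerivAt.fun_sum fun j _ => ?_
    have h2 : HasFDerivAt (fun y : Pt (k + 1) => y 0 - y j.succ)
        (prj k 0 - prj k j.succ) x :=
      ((prj k 0).hasFDerivAt.sub (prj k j.succ).hasFDerivAt)
    have h3 : HasFDerivAt (fun y : Pt (k + 1) => (y 0 - y j.succ)⁻¹)
        ((ContinuousLinearMap.smulRight (1 : ℂ →L[ℂ] ℂ) (-((x 0 - x j.succ) ^ 2)⁻¹)).comp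
          (prj k 0 - prj k j.succ)) x :=
      (hasDerivAt_inv (hne j)).hasFDerivAt.comp x h2
    have h4 := h3.const_mul (dd j w)
    exact (hdiff j).hasFDerivAt.mul h4
  simp only [div_eq_mul_inv]
  rw [H.fderiv]
  simp only [ContinuousLinearMap.sum_apply, ContinuousLinearMap.add_apply,
    ContinuousLinearMap.smul_apply, ContinuousLinearMap.coe_comp', Function.comp_apply, ContinuousLinearMap.sub_apply,
    prj_apply, ContinuousLinearMap.smulRight_apply,
    ContinuousLinearMap.one_apply, smul_eq_mul, single_apply']
  refine Finset.sum_congr rfl fun j _ => ?_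
  simp only [dd]
  ring


lemma dOmega_eq {n : ℕ} (A : Fin k → Pt (k + 1) → Matrix (Fin n) (Fin n) ℂ)
    (Ω : MForm n (k + 1) 1)
    (hΩ : ∀ p q x, ∀ idx : Fin 1 → Fin (k + 1), Ω p q x idx
      = ∑ j, A j x p q * (dd j (idx 0) / (x 0 - x j.succ)))
    (p q : Fin n) (x : Pt (k + 1))
    (hdiff : ∀ j : Fin k, DifferentiableAt ℂ (fun y => A j y p q) x)
    (hz : ∀ j : Fin k, x 0 ≠ x j.succ) (idx : Fin 2 → Fin (k + 1)) :
    MForm.d Ω p q x idx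
      = ∑ j, (fderiv ℂ (fun y => A j y p q) x (Pi.single (idx 0) 1)
            * (dd j (idx 1) / (x 0 - x j.succ))
          - fderiv ℂ (fun y => A j y p q) x (Pi.single (idx 1) 1)
            * (dd j (idx 0) / (x 0 - x j.succ))) := by
  have hfun : ∀ (ι : Fin 1 → Fin (k + 1)), (fun y => Ω p q y ι)
      = fun y => ∑ j, A j y p q * (dd j (ι 0) / (y 0 - y j.succ)) :=
    fun ι => funext fun y => hΩ p q y ι
  have key : ∀ (ι : Fin 1 → Fin (k + 1)) (u : Fin (k + 1)),
      fderiv ℂ (fun y => Ω p q y ι) x (Pi.single u 1)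
        = ∑ j, (fderiv ℂ (fun y => A j y p q) x (Pi.single u 1)
              * (dd j (ι 0) / (x 0 - x j.succ))
            + A j x p q * dd j (ι 0) * (-((x 0 - x j.succ) ^ 2)⁻¹) * dd j u) := by
    intro ι u
    rw [hfun ι]
    exact fderiv_coeff A p q x hdiff hz (ι 0) u
  show Form.d (Ω p q) x idx = _
  rw [Form.d]
  rw [Fin.sum_univ_two]
  rw [key _ (idx 0), key _ (idx 1)]
  have e0 : Fin.succAbove (0 : Fin 2) (0 : Fin 1) = 1 := rfl
  have e1 : Fin.succAbove (1 : Fin 2) (0 : Fin 1) = 0 := rfl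
  rw [e0, e1]
  simp only [Fin.val_zero, pow_zero, one_mul, Fin.val_one, pow_one, neg_one_mul]
  rw [← Finset.sum_neg_distrib, ← Finset.sum_add_distrib]
  exact Finset.sum_congr rfl fun j _ => by ring


lemma wedge_eq {n : ℕ} (A : Fin k → Pt (k + 1) → Matrix (Fin n) (Fin n) ℂ)
    (Ω : MForm n (k + 1) 1)
    (hΩ : ∀ p q x, ∀ idx : Fin 1 → Fin (k + 1), Ω p q x idx
      = ∑ j, A j x p q * (dd j (idx 0) / (x 0 - x j.succ)))
    (p q : Fin n) (x : Pt (k + 1)) (idx : Fin 2 → Fin (k + 1)) :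
    MForm.wedge Ω Ω p q x idx
      = ∑ i, ∑ j, (A i x * A j x) p q *
          ((dd i (idx 0) / (x 0 - x i.succ)) * (dd j (idx 1) / (x 0 - x j.succ))
            - (dd i (idx 1) / (x 0 - x i.succ)) * (dd j (idx 0) / (x 0 - x j.succ))) := by
  have s2 : ((Equiv.Perm.sign (Equiv.swap (0 : Fin 2) 1) : ℤ) : ℂ) = -1 := by
    rw [Equiv.Perm.sign_swap (by decide)]; norm_num
  have c10 : (Fin.castAdd 1 (0 : Fin 1)) = (0 : Fin 2) := rfl
  have c11 : (Fin.natAdd 1 (0 : Fin 1)) = (1 : Fin 2) := rfl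
  have hr : ∀ r : Fin n, Form.wedge (Ω p r) (Ω r q) x idx
      = (∑ i, A i x p r * (dd i (idx 0) / (x 0 - x i.succ)))
          * (∑ j, A j x r q * (dd j (idx 1) / (x 0 - x j.succ)))
        - (∑ i, A i x p r * (dd i (idx 1) / (x 0 - x i.succ)))
          * (∑ j, A j x r q * (dd j (idx 0) / (x 0 - x j.succ))) := by
    intro r
    rw [Form.wedge, perm2]
    simp only [hΩ, s2, c10, c11, Equiv.Perm.coe_one, id_eq, Equiv.swap_apply_left,
      Equiv.swap_apply_right, Equiv.Perm.sign_one, Units.val_one, Int.cast_one,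
      Nat.factorial_one, Nat.cast_one, mul_one, one_mul, inv_one, neg_one_mul]
    ring
  rw [show MForm.wedge Ω Ω p q x idx = ∑ r, Form.wedge (Ω p r) (Ω r q) x idx from rfl]
  rw [Finset.sum_congr rfl fun r _ => hr r]
  have expand : ∀ r : Fin n,
      ((∑ i, A i x p r * (dd i (idx 0) / (x 0 - x i.succ)))
          * (∑ j, A j x r q * (dd j (idx 1) / (x 0 - x j.succ)))
        - (∑ i, A i x p r * (dd i (idx 1) / (x 0 - x i.succ)))
          * (∑ j, A j x r q * (dd j (idx 0) / (x 0 - x j.succ))))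
      = ∑ i, ∑ j,
          ((A i x p r * (dd i (idx 0) / (x 0 - x i.succ)))
              * (A j x r q * (dd j (idx 1) / (x 0 - x j.succ)))
            - (A i x p r * (dd i (idx 1) / (x 0 - x i.succ)))
              * (A j x r q * (dd j (idx 0) / (x 0 - x j.succ)))) := by
    intro r
    rw [Finset.sum_mul_sum, Finset.sum_mul_sum, ← Finset.sum_sub_distrib]
    exact Finset.sum_congr rfl fun i _ => by rw [← Finset.sum_sub_distrib]
  rw [Finset.sum_congr rfl fun r _ => expand r, Finset.sum_comm]
  rw [Finset.sum_congr rfl fun i (_ : i ∈ Finset.univ) => Finset.sum_comm]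
  refine Finset.sum_congr rfl fun i _ => Finset.sum_congr rfl fun j _ => ?_
  rw [Matrix.mul_apply, Finset.sum_mul]
  exact Finset.sum_congr rfl fun r _ => by ring


def Uset (k : ℕ) : Set (Pt (k + 1)) := {x | ∀ i j : Fin k, i ≠ j → x i.succ ≠ x j.succ}

lemma Uopen : IsOpen (Uset k) := hUopen

lemma mem_Uset_pr (x : Pt (k + 1)) (hx : x ∈ Uset k) : pr k x ∈ Uset k := by
  intro i j hij
  rw [pr_succ, pr_succ]
  exact hx i j hij

section Aentries
variable {n : ℕ} (A : Fin k → Pt (k + 1) → Matrix (Fin n) (Fin n) ℂ)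
  (hAdep : ∀ s x y, (∀ j : Fin k, x j.succ = y j.succ) → A s x = A s y)
  (hAhol : ∀ s p q, DifferentiableOn ℂ (fun x => A s x p q)
    {x : Pt (k + 1) | ∀ i j : Fin k, i ≠ j → x i.succ ≠ x j.succ})

include hAdep hAhol in
lemma fderiv_pr (s : Fin k) (p q : Fin n) (x : Pt (k + 1)) (hx : x ∈ Uset k) :
    fderiv ℂ (fun y => A s y p q) x
      = (fderiv ℂ (fun y => A s y p q) (pr k x)).comp (pr k) := by
  have h1 : DifferentiableAt ℂ (fun y => A s y p q) (pr k x) :=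
    (hAhol s p q).differentiableAt (Uopen.mem_nhds (mem_Uset_pr x hx))
  have h2 : DifferentiableAt ℂ (⇑(pr k)) x := (pr k).differentiableAt
  have h3 := fderiv_comp (𝕜 := ℂ) (x := x) h1 h2
  rw [(pr k).fderiv] at h3
  calc fderiv ℂ (fun y => A s y p q) x
      = fderiv ℂ ((fun y => A s y p q) ∘ ⇑(pr k)) x := by
        congr 1
        funext y
        have := hAdep s y (pr k y) fun j => (pr_succ y j).symm
        exact congrFun (congrFun this p) q
    _ = _ := h3

include hAdep hAhol in
lemma E_zero (s : Fin k) (p q : Fin n) (x : Pt (k + 1)) (hx : x ∈ Uset k) :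
    fderiv ℂ (fun y => A s y p q) x (Pi.single (0 : Fin (k + 1)) 1) = 0 := by
  rw [fderiv_pr A hAdep hAhol s p q x hx, ContinuousLinearMap.comp_apply, pr_single_zero,
    map_zero]

include hAdep hAhol in
lemma E_dep (s : Fin k) (p q : Fin n) (x y : Pt (k + 1)) (hx : x ∈ Uset k) (hy : y ∈ Uset k)
    (hxy : ∀ j : Fin k, x j.succ = y j.succ) (v : Fin (k + 1)) :
    fderiv ℂ (fun z => A s z p q) x (Pi.single v 1)
      = fderiv ℂ (fun z => A s z p q) y (Pi.single v 1) := by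
  have hpr : pr k x = pr k y := by
    funext i
    rw [pr_apply, pr_apply]
    rcases Fin.eq_zero_or_eq_succ i with rfl | ⟨j, rfl⟩
    · simp
    · rw [if_neg (Fin.succ_ne_zero j), if_neg (Fin.succ_ne_zero j)]
      exact hxy j
  rw [fderiv_pr A hAdep hAhol s p q x hx, fderiv_pr A hAdep hAhol s p q y hy, hpr]

end Aentries

lemma flat_reduction (L : Fin k → ℂ) (z : ℂ)
    (E : Fin k → Fin (k + 1) → ℂ) (hE0 : ∀ j, E j 0 = 0) (M : Fin k → Fin k → ℂ) (t : Fin k)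
    (h : ∑ j, (E j 0 * (dd j t.succ / (z - L j)) - E j t.succ * (dd j 0 / (z - L j)))
        = ∑ i, ∑ j, M i j *
            ((dd i 0 / (z - L i)) * (dd j t.succ / (z - L j))
              - (dd i t.succ / (z - L i)) * (dd j 0 / (z - L j)))) :
    ∑ j, E j t.succ / (z - L j) = ∑ j, (M j t - M t j) / ((z - L t) * (z - L j)) := by
  have l1 : (∑ j, (E j 0 * (dd j t.succ / (z - L j)) - E j t.succ * (dd j 0 / (z - L j))))
      = -∑ j, E j t.succ / (z - L j) := by
    rw [← Finset.sum_neg_distrib]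
    refine Finset.sum_congr rfl fun j _ => ?_
    rw [hE0, dd_zero]
    ring
  have r1 : (∑ i, ∑ j, M i j *
        ((dd i 0 / (z - L i)) * (dd j t.succ / (z - L j))
          - (dd i t.succ / (z - L i)) * (dd j 0 / (z - L j))))
      = -∑ j, (M j t - M t j) / ((z - L t) * (z - L j)) := by
    have step : ∀ i j : Fin k, M i j *
          ((dd i 0 / (z - L i)) * (dd j t.succ / (z - L j))
            - (dd i t.succ / (z - L i)) * (dd j 0 / (z - L j)))
        = (if t = j then -(M i j / ((z - L i) * (z - L j))) else 0)
          + (if t = i then M i j / ((z - L i) * (z - L j)) else 0) := by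
      intro i j
      rw [dd_zero, dd_zero, dd_succ, dd_succ]
      simp only [div_eq_mul_inv, mul_inv]
      split_ifs <;> ring
    rw [Finset.sum_congr rfl fun i _ => Finset.sum_congr rfl fun j _ => step i j]
    rw [Finset.sum_congr rfl fun i (_ : i ∈ Finset.univ) => Finset.sum_add_distrib]
    rw [Finset.sum_add_distrib]
    have p1 : (∑ i, ∑ j, (if t = j then -(M i j / ((z - L i) * (z - L j))) else 0) : ℂ)
        = ∑ i, -(M i t / ((z - L i) * (z - L t))) := by
      refine Finset.sum_congr rfl fun i _ => ?_
      rw [Finset.sum_ite_eq]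
      simp
    have p2 : (∑ i, ∑ j, (if t = i then M i j / ((z - L i) * (z - L j)) else 0) : ℂ)
        = ∑ j, M t j / ((z - L t) * (z - L j)) := by
      have : ∀ i : Fin k, (∑ j, (if t = i then M i j / ((z - L i) * (z - L j)) else 0) : ℂ)
          = if t = i then ∑ j, M i j / ((z - L i) * (z - L j)) else 0 := by
        intro i
        by_cases hti : t = i <;> simp [hti]
      rw [Finset.sum_congr rfl fun i _ => this i, Finset.sum_ite_eq]
      simp
    rw [p1, p2, ← Finset.sum_add_distrib, ← Finset.sum_neg_distrib]
    refine Finset.sum_congr rfl fun j _ => ?_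
    ring
  rw [l1, r1] at h
  exact neg_injective h


lemma dFun_eq {m : ℕ} (g : Pt m → ℂ) (x : Pt m) (idx : Fin 1 → Fin m) :
    Form.dFun g x idx = fderiv ℂ g x (Pi.single (idx 0) 1) := by
  rw [Form.dFun]; unfold Form.d; rw [Fin.sum_univ_one]
  simp

end Stmt15Aux

/-- Schlesinger equations: for `Ω = Σⱼ Aⱼ(λ) dfⱼ/fⱼ` on `ℂ^{1+k}` with
`fⱼ(z,λ) = z − λⱼ`, the `Aⱼ` depending only on `λ` and `Σⱼ Aⱼ ≡ 0`, the form `Ω` is flat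
(`dΩ = Ω ∧ Ω` off the polar locus and the collision locus) if and only if the `Aⱼ`
satisfy `dA_s = −Σ_{j≠s} [A_s, A_j] (dλ_s − dλ_j)/(λ_s − λ_j)` off the collision locus. -/
theorem stmt15 (n k : ℕ)
    (A : Fin k → Pt (k + 1) → Matrix (Fin n) (Fin n) ℂ)
    (hAdep : ∀ s x y, (∀ j : Fin k, x j.succ = y j.succ) → A s x = A s y)
    (hAhol : ∀ s p q, DifferentiableOn ℂ (fun x => A s x p q)
      {x : Pt (k + 1) | ∀ i j : Fin k, i ≠ j → x i.succ ≠ x j.succ})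
    (hsum : ∀ x, ∑ s, A s x = 0)
    (Ω : MForm n (k + 1) 1)
    (hΩ : ∀ p q x, ∀ idx : Fin 1 → Fin (k + 1), Ω p q x idx =
      ∑ j, A j x p q *
        (((if idx 0 = 0 then 1 else 0) - (if idx 0 = j.succ then 1 else 0)) /
          (x 0 - x j.succ))) :
    ((∀ x : Pt (k + 1), (∀ i j : Fin k, i ≠ j → x i.succ ≠ x j.succ) →
        (∀ j : Fin k, x 0 ≠ x j.succ) →
        ∀ p q, ∀ idx : Fin 2 → Fin (k + 1),
          MForm.d Ω p q x idx = MForm.wedge Ω Ω p q x idx)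
      ↔
      (∀ s : Fin k, ∀ x : Pt (k + 1), (∀ i j : Fin k, i ≠ j → x i.succ ≠ x j.succ) →
        ∀ p q, ∀ idx : Fin 1 → Fin (k + 1),
          Form.dFun (fun y => A s y p q) x idx =
            -∑ j ∈ Finset.univ \ {s},
              (A s x * A j x - A j x * A s x) p q *
                (((if idx 0 = s.succ then 1 else 0) -
                    (if idx 0 = j.succ then 1 else 0)) /
                  (x s.succ - x j.succ)))) := by
  classical
  have hΩ' : ∀ p q x, ∀ idx : Fin 1 → Fin (k + 1), Ω p q x idx
      = ∑ j, A j x p q * (Stmt15Aux.dd j (idx 0) / (x 0 - x j.succ)) := by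
    intro p q x idx
    rw [hΩ]
    rfl
  constructor
  · -- flatness implies Schlesinger
    intro hflat s x hx p q idx
    have hxU : x ∈ Stmt15Aux.Uset k := hx
    rw [Stmt15Aux.dFun_eq]
    have hflat' : ∀ z : ℂ, (∀ j : Fin k, z ≠ x j.succ) → ∀ t : Fin k,
        ∑ j, fderiv ℂ (fun y => A j y p q) x (Pi.single t.succ 1) / (z - x j.succ)
          = ∑ j, ((A j x * A t x) p q - (A t x * A j x) p q)
              / ((z - x t.succ) * (z - x j.succ)) := by
      intro z hz t
      have hy0 : Function.update x 0 z 0 = z := Function.update_self 0 z x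
      have hysucc : ∀ j : Fin k, Function.update x 0 z j.succ = x j.succ :=
        fun j => Function.update_of_ne (Fin.succ_ne_zero j) z x
      have hyU : ∀ i j : Fin k, i ≠ j →
          Function.update x 0 z i.succ ≠ Function.update x 0 z j.succ := by
        intro i j hij
        rw [hysucc, hysucc]
        exact hx i j hij
      have hyz : ∀ j : Fin k, Function.update x 0 z 0 ≠ Function.update x 0 z j.succ := by
        intro j
        rw [hy0, hysucc]
        exact hz j
      have hdiffy : ∀ j : Fin k, DifferentiableAt ℂ (fun y' => A j y' p q)
          (Function.update x 0 z) :=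
        fun j => (hAhol j p q).differentiableAt (Stmt15Aux.Uopen.mem_nhds hyU)
      have hfl := hflat (Function.update x 0 z) hyU hyz p q ![0, t.succ]
      rw [Stmt15Aux.dOmega_eq A Ω hΩ' p q _ hdiffy hyz,
        Stmt15Aux.wedge_eq A Ω hΩ' p q _] at hfl
      simp only [Matrix.cons_val_zero, Matrix.cons_val_one, Matrix.head_cons] at hfl
      have hEy : ∀ (j : Fin k) (v : Fin (k + 1)),
          fderiv ℂ (fun y' => A j y' p q) (Function.update x 0 z) (Pi.single v 1)
            = fderiv ℂ (fun y' => A j y' p q) x (Pi.single v 1) :=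
        fun j v => Stmt15Aux.E_dep A hAdep hAhol j p q _ x hyU hxU (fun i => hysucc i) v
      have hAy : ∀ j : Fin k, A j (Function.update x 0 z) = A j x :=
        fun j => hAdep j _ x fun i => hysucc i
      simp only [hEy, hAy, hy0, hysucc] at hfl
      have := Stmt15Aux.flat_reduction (fun j => x j.succ) z
        (fun j w => fderiv ℂ (fun y => A j y p q) x (Pi.single w 1))
        (fun j => Stmt15Aux.E_zero A hAdep hAhol j p q x hxU)
        (fun i j => (A i x * A j x) p q) t hfl
      simpa using this
    have hkf := Stmt15Aux.key_forward (fun j => x j.succ) hx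
        (fun j w => fderiv ℂ (fun y => A j y p q) x (Pi.single w 1))
        (fun i j => (A i x * A j x) p q)
        (fun j => Stmt15Aux.E_zero A hAdep hAhol j p q x hxU)
        (by
          intro z hz t
          simpa using hflat' z hz t)
        s (idx 0)
    exact hkf
  · -- Schlesinger implies flatness
    intro hSch x hx hz p q idx
    have hxU : x ∈ Stmt15Aux.Uset k := hx
    have hdiffx : ∀ j : Fin k, DifferentiableAt ℂ (fun y => A j y p q) x :=
      fun j => (hAhol j p q).differentiableAt (Stmt15Aux.Uopen.mem_nhds hx)
    rw [Stmt15Aux.dOmega_eq A Ω hΩ' p q x hdiffx hz,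
      Stmt15Aux.wedge_eq A Ω hΩ' p q x]
    refine Stmt15Aux.key_scalar (fun j => x j.succ) (x 0) hx hz
        (fun j w => fderiv ℂ (fun y => A j y p q) x (Pi.single w 1))
        (fun i j => (A i x * A j x) p q) (idx 0) (idx 1) ?_
    intro s w
    have h := hSch s x hx p q fun _ => w
    rw [Stmt15Aux.dFun_eq] at h
    exact h
end
end

section
/- Let Ω₀ = diag(α₁,…,α_n) be a diagonal matrix 1-form whose entries αᵢ = Σ_s aᵢ^s dt_s/t_s are closed logarithmic forms with constant residue vectors aᵢ ∈ ℂ^m, and suppose Ω₀ is non-resonant: aᵢ − aⱼ ∉ ℤ^m for all i ≠ j. Then the only formal gauge transformations H = E + (higher order terms) with dH = Ω₀H − HΩ₀ are constant diagonal matrices; in particular the normalizing transform with H(0) = E conjugating a flat perturbation of Ω₀ to Ω₀ is unique. -/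
open scoped BigOperators

noncomputable section

section Aux

open Metric Filter Topology

private lemma psum_aux {M : Type*} [AddCommMonoid M] {k : ℕ} (hk : k = 1)
    (f : Equiv.Perm (Fin k) → M) : ∑ σ, f σ = f 1 := by
  subst hk
  haveI : Subsingleton (Equiv.Perm (Fin 1)) :=
    ⟨fun a b => Equiv.ext fun i => Subsingleton.elim _ _⟩
  exact Fintype.sum_subsingleton f 1

private lemma psum10 {M : Type*} [AddCommMonoid M] (f : Equiv.Perm (Fin (1 + 0)) → M) :
    ∑ σ, f σ = f 1 := psum_aux rfl f

private lemma psum01 {M : Type*} [AddCommMonoid M] (f : Equiv.Perm (Fin (0 + 1)) → M) :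
    ∑ σ, f σ = f 1 := psum_aux rfl f

private lemma fsum01 {M : Type*} [AddCommMonoid M] (f : Fin (0 + 1) → M) :
    ∑ j, f j = f 0 := Fin.sum_univ_one f

private lemma exists_nonint {m : ℕ} {c : Fin m → ℂ}
    (h : ¬ ∃ z : Fin m → ℤ, ∀ s, c s = (z s : ℂ)) :
    ∃ s, ∀ k : ℤ, c s ≠ (k : ℂ) := by
  by_contra hc
  push_neg at hc
  exact h ⟨fun s => (hc s).choose, fun s => (hc s).choose_spec⟩

/-- For a 1-variable holomorphic `g` on a disk, if `z g' = c g` off `0` with `c` not a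
natural number, then `g ≡ 0`. -/
private lemma onevar {R : ℝ} {c : ℂ} (hc : ∀ k : ℕ, c ≠ (k : ℂ))
    {g : ℂ → ℂ} (hg : DifferentiableOn ℂ g (Metric.ball 0 R))
    (heq : ∀ z ∈ Metric.ball (0 : ℂ) R, z ≠ 0 → z * deriv g z = c * g z) :
    ∀ z ∈ Metric.ball (0 : ℂ) R, g z = 0 := by
  intro z hz
  have hR : 0 < R := Metric.pos_of_mem_ball hz
  have h0m : (0 : ℂ) ∈ Metric.ball (0 : ℂ) R := Metric.mem_ball_self hR
  have hball : IsOpen (Metric.ball (0 : ℂ) R) := Metric.isOpen_ball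
  have hga : AnalyticOnNhd ℂ g (Metric.ball 0 R) := hg.analyticOnNhd hball
  have hiter : ∀ k, AnalyticOnNhd ℂ (iteratedDeriv k g) (Metric.ball 0 R) := by
    intro k
    induction k with
    | zero => simpa [iteratedDeriv_zero] using hga
    | succ k ih => rw [iteratedDeriv_succ]; exact ih.deriv
  have base : ∀ w ∈ Metric.ball (0 : ℂ) R, w * deriv g w = c * g w := by
    intro w hw
    rcases eq_or_ne w 0 with h0 | h0
    · subst h0
      set φ : ℂ → ℂ := fun w => w * deriv g w - c * g w with hφ
      have hcont : ContinuousAt φ 0 := by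
        have h1 : AnalyticAt ℂ (deriv g) 0 := hga.deriv 0 h0m
        have h2 : AnalyticAt ℂ g 0 := hga 0 h0m
        exact (continuousAt_id.mul h1.continuousAt).sub (continuousAt_const.mul h2.continuousAt)
      have hev : φ =ᶠ[𝓝[≠] (0 : ℂ)] 0 := by
        filter_upwards [self_mem_nhdsWithin,
          nhdsWithin_le_nhds (hball.mem_nhds h0m)] with w hw1 hw2
        simpa [hφ] using sub_eq_zero.mpr (heq w hw2 hw1)
      have t1 : Tendsto φ (𝓝[≠] (0 : ℂ)) (𝓝 (φ 0)) := hcont.continuousWithinAt.tendsto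
      have t2 : Tendsto φ (𝓝[≠] (0 : ℂ)) (𝓝 0) := by
        rw [tendsto_congr' hev]
        exact tendsto_const_nhds
      have hφ0 : φ 0 = 0 := tendsto_nhds_unique t1 t2
      have : c * g 0 = 0 := by simpa [hφ] using hφ0
      simp [this]
    · exact heq w hw h0
  have key : ∀ k : ℕ, ∀ w ∈ Metric.ball (0 : ℂ) R,
      w * iteratedDeriv (k + 1) g w = (c - k) * iteratedDeriv k g w := by
    intro k
    induction k with
    | zero =>
      intro w hw
      simpa [iteratedDeriv_one, iteratedDeriv_zero] using base w hw
    | succ k ih =>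
      intro w hw
      have hd1 : DifferentiableAt ℂ (iteratedDeriv (k + 1) g) w :=
        ((hiter (k + 1)) w hw).differentiableAt
      have hd0 : DifferentiableAt ℂ (iteratedDeriv k g) w :=
        ((hiter k) w hw).differentiableAt
      have hEq : (fun w => w * iteratedDeriv (k + 1) g w)
          =ᶠ[𝓝 w] fun w => (c - k) * iteratedDeriv k g w := by
        filter_upwards [hball.mem_nhds hw] with y hy using ih y hy
      have hder := hEq.deriv_eq
      rw [deriv_fun_mul differentiableAt_fun_id hd1, deriv_const_mul _ hd0, deriv_id'',
        ← iteratedDeriv_succ, ← iteratedDeriv_succ, one_mul] at hder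
      push_cast
      linear_combination hder
  have hzero : ∀ k, iteratedDeriv k g 0 = 0 := by
    intro k
    have hk := key k 0 h0m
    have hck : (c - (k : ℂ)) ≠ 0 := sub_ne_zero.mpr (hc k)
    rw [zero_mul] at hk
    exact (mul_eq_zero.mp hk.symm).resolve_left hck
  have hs := Complex.hasSum_taylorSeries_on_ball hg hz
  simp only [hzero, smul_zero, smul_eq_mul, mul_zero] at hs
  exact (hasSum_zero.unique hs).symm

/-- A 1-variable holomorphic function on a disk with vanishing derivative off `0` is constant. -/
private lemma const1 {R : ℝ} {g : ℂ → ℂ}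
    (hg : DifferentiableOn ℂ g (Metric.ball 0 R))
    (heq : ∀ z ∈ Metric.ball (0 : ℂ) R, z ≠ 0 → deriv g z = 0) :
    ∀ z ∈ Metric.ball (0 : ℂ) R, ∀ w ∈ Metric.ball (0 : ℂ) R, g z = g w := by
  intro z hz w hw
  have hR : 0 < R := Metric.pos_of_mem_ball hz
  have h0m : (0 : ℂ) ∈ Metric.ball (0 : ℂ) R := Metric.mem_ball_self hR
  have hball : IsOpen (Metric.ball (0 : ℂ) R) := Metric.isOpen_ball
  have hga : AnalyticOnNhd ℂ g (Metric.ball 0 R) := hg.analyticOnNhd hball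
  have hderiv0 : ∀ y ∈ Metric.ball (0 : ℂ) R, deriv g y = 0 := by
    intro y hy
    rcases eq_or_ne y 0 with h0 | h0
    · subst h0
      have hcont : ContinuousAt (deriv g) 0 := (hga.deriv 0 h0m).continuousAt
      have hev : deriv g =ᶠ[𝓝[≠] (0 : ℂ)] 0 := by
        filter_upwards [self_mem_nhdsWithin,
          nhdsWithin_le_nhds (hball.mem_nhds h0m)] with v hv1 hv2
        simpa using heq v hv2 hv1
      have t1 : Tendsto (deriv g) (𝓝[≠] (0 : ℂ)) (𝓝 (deriv g 0)) :=
        hcont.continuousWithinAt.tendsto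
      have t2 : Tendsto (deriv g) (𝓝[≠] (0 : ℂ)) (𝓝 0) := by
        rw [tendsto_congr' hev]; exact tendsto_const_nhds
      exact tendsto_nhds_unique t1 t2
    · exact heq y hy h0
  have hfz : ∀ y ∈ Metric.ball (0 : ℂ) R, fderiv ℂ g y = 0 := by
    intro y hy
    apply ContinuousLinearMap.ext_ring
    have hdy : DifferentiableAt ℂ g y := (hga y hy).differentiableAt
    simp [fderiv_apply_one_eq_deriv, hderiv0 y hy]
  exact (convex_ball (0 : ℂ) R).is_const_of_fderivWithin_eq_zero hg
    (fun y hy => by rw [fderivWithin_of_isOpen hball hy]; exact hfz y hy) hz hw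

/-- Continuity plus vanishing on the set of points with all coordinates nonzero gives
vanishing on the whole polydisk. -/
private lemma dense_ext {m : ℕ} {r : ℝ} (hr : 0 < r) {φ : Pt m → ℂ}
    (hφ : ContinuousOn φ (Metric.ball (0 : Pt m) r))
    (h0 : ∀ x ∈ Metric.ball (0 : Pt m) r, (∀ s, x s ≠ 0) → φ x = 0) :
    ∀ x ∈ Metric.ball (0 : Pt m) r, φ x = 0 := by
  intro x hx
  have hxco : ∀ s, ‖x s‖ < r := by
    rw [mem_ball_zero_iff, pi_norm_lt_iff hr] at hx
    exact hx
  set y : ℂ → Pt m := fun t s => if x s = 0 then t else x s with hy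
  have hy0 : y 0 = x := by
    funext s
    by_cases h : x s = 0 <;> simp [hy, h]
  have hycont : Continuous y := by
    apply continuous_pi
    intro s
    by_cases h : x s = 0 <;> simp [hy, h] <;> fun_prop
  have hymem : ∀ t : ℂ, ‖t‖ < r → y t ∈ Metric.ball (0 : Pt m) r := by
    intro t ht
    rw [mem_ball_zero_iff, pi_norm_lt_iff hr]
    intro s
    by_cases h : x s = 0
    · simpa [hy, h] using ht
    · simpa [hy, h] using hxco s
  have hcont : ContinuousAt (φ ∘ y) 0 := by
    have : ContinuousAt φ x := hφ.continuousAt (Metric.isOpen_ball.mem_nhds hx)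
    exact (hy0 ▸ this).comp hycont.continuousAt
  have hev : (φ ∘ y) =ᶠ[𝓝[≠] (0 : ℂ)] 0 := by
    have hball : Metric.ball (0 : ℂ) r ∈ 𝓝 (0 : ℂ) := Metric.ball_mem_nhds 0 hr
    filter_upwards [self_mem_nhdsWithin, nhdsWithin_le_nhds hball] with t ht1 ht2
    have htr : ‖t‖ < r := by simpa [mem_ball_zero_iff] using ht2
    have hnz : ∀ s, y t s ≠ 0 := by
      intro s
      by_cases h : x s = 0
      · simpa [hy, h] using ht1
      · simp [hy, h]
    simpa using h0 (y t) (hymem t htr) hnz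
  have t1 : Tendsto (φ ∘ y) (𝓝[≠] (0 : ℂ)) (𝓝 ((φ ∘ y) 0)) :=
    hcont.continuousWithinAt.tendsto
  have t2 : Tendsto (φ ∘ y) (𝓝[≠] (0 : ℂ)) (𝓝 0) := by
    rw [tendsto_congr' hev]; exact tendsto_const_nhds
  have := tendsto_nhds_unique t1 t2
  simpa [hy0] using this

/-- Restriction of the PDE to a coordinate line. -/
private lemma restrict {m : ℕ} {r : ℝ} {h : Pt m → ℂ}
    (hh : DifferentiableOn ℂ h (Metric.ball (0 : Pt m) r))
    {s₀ : Fin m} {c : ℂ}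
    (hpde : ∀ x ∈ Metric.ball (0 : Pt m) r, (∀ s, x s ≠ 0) →
      fderiv ℂ h x (Pi.single s₀ 1) = c / x s₀ * h x)
    {x' : Pt m} (hx' : x' ∈ Metric.ball (0 : Pt m) r) (hnz : ∀ s, x' s ≠ 0) :
    DifferentiableOn ℂ (fun z => h (fun s => if s = s₀ then z else x' s)) (Metric.ball 0 r) ∧
    ∀ z ∈ Metric.ball (0 : ℂ) r, z ≠ 0 →
      z * deriv (fun z => h (fun s => if s = s₀ then z else x' s)) z
        = c * h (fun s => if s = s₀ then z else x' s) := by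
  have hr : 0 < r := Metric.pos_of_mem_ball hx'
  have hxco : ∀ s, ‖x' s‖ < r := by
    rw [mem_ball_zero_iff, pi_norm_lt_iff hr] at hx'
    exact hx'
  set y₀ : Pt m := fun s => if s = s₀ then 0 else x' s with hy₀
  set e₀ : Pt m := Pi.single s₀ (1 : ℂ) with he₀
  have hℓ : ∀ z : ℂ, (fun s => if s = s₀ then z else x' s) = y₀ + z • e₀ := by
    intro z
    funext s
    by_cases hs : s = s₀ <;> simp [hy₀, he₀, hs, Pi.single_apply]
  have hmem : ∀ z : ℂ, z ∈ Metric.ball (0 : ℂ) r → y₀ + z • e₀ ∈ Metric.ball (0 : Pt m) r := by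
    intro z hz
    rw [mem_ball_zero_iff, pi_norm_lt_iff hr]
    intro s
    have hzr : ‖z‖ < r := by simpa [mem_ball_zero_iff] using hz
    have : (y₀ + z • e₀) s = if s = s₀ then z else x' s := by rw [← hℓ]
    rw [this]
    by_cases hs : s = s₀
    · simpa [hs] using hzr
    · simpa [hs] using hxco s
  have hder : ∀ z ∈ Metric.ball (0 : ℂ) r,
      HasDerivAt (fun z => h (y₀ + z • e₀)) (fderiv ℂ h (y₀ + z • e₀) e₀) z := by
    intro z hz
    have hd : HasDerivAt (fun z : ℂ => y₀ + z • e₀) e₀ z := by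
      simpa using ((hasDerivAt_id z).smul_const e₀).const_add y₀
    have hfd : HasFDerivAt h (fderiv ℂ h (y₀ + z • e₀)) (y₀ + z • e₀) :=
      (hh.differentiableAt (Metric.isOpen_ball.mem_nhds (hmem z hz))).hasFDerivAt
    exact hfd.comp_hasDerivAt z hd
  have hgrw : (fun z => h (fun s => if s = s₀ then z else x' s)) =
      fun z => h (y₀ + z • e₀) := by
    funext z; rw [hℓ]
  constructor
  · rw [hgrw]
    exact fun z hz => ((hder z hz).differentiableAt).differentiableWithinAt
  · intro z hz hz0
    rw [hgrw]
    have hdz := (hder z hz).deriv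
    rw [hdz]
    have hnz' : ∀ s, (y₀ + z • e₀) s ≠ 0 := by
      intro s
      have : (y₀ + z • e₀) s = if s = s₀ then z else x' s := by rw [← hℓ]
      rw [this]
      by_cases hs : s = s₀ <;> simp [hs, hz0, hnz s]
    have hcoord : (y₀ + z • e₀) s₀ = z := by
      have : (y₀ + z • e₀) s₀ = if s₀ = s₀ then z else x' s₀ := by rw [← hℓ]
      simpa using this
    rw [hpde _ (hmem z hz) hnz', hcoord, hℓ z]
    field_simp

end Aux

/-- for a non-resonant diagonal Euler form
`Ω₀ = diag(α₁,…,α_n)`, `αᵢ = Σ_s aᵢ^s dt_s/t_s` (i.e. `aᵢ − aⱼ ∉ ℤ^m` for `i ≠ j`),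
every holomorphic gauge transformation `H` conjugating `Ω₀` to itself
(`dH = Ω₀H − HΩ₀`) is a constant diagonal matrix; in particular the normalizing
transform with `H(0) = E` is the identity. -/
theorem stmt19 (n m : ℕ) (r : ℝ) (hr : 0 < r)
    (a : Fin n → Fin m → ℂ)
    (hres : ∀ i j : Fin n, i ≠ j → ¬ ∃ z : Fin m → ℤ, ∀ s, a i s - a j s = (z s : ℂ))
    (Ω₀ : MForm n m 1)
    (hΩ₀ : ∀ p q x, ∀ idx : Fin 1 → Fin m,
      Ω₀ p q x idx = if p = q then a p (idx 0) / x (idx 0) else 0)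
    (H : Pt m → Matrix (Fin n) (Fin n) ℂ)
    (hH : ∀ p q, DifferentiableOn ℂ (fun x => H x p q) (Metric.ball (0 : Pt m) r))
    (hgauge : ∀ x ∈ Metric.ball (0 : Pt m) r, (∀ s, x s ≠ 0) →
      ∀ p q, ∀ idx : Fin 1 → Fin m,
        MForm.d (MForm.ofFun H) p q x idx =
          MForm.wedge Ω₀ (MForm.ofFun H) p q x idx -
            MForm.wedge (MForm.ofFun H) Ω₀ p q x idx) :
    (∃ C : Matrix (Fin n) (Fin n) ℂ, (∀ p q, p ≠ q → C p q = 0) ∧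
        ∀ x ∈ Metric.ball (0 : Pt m) r, H x = C) ∧
      (H 0 = 1 → ∀ x ∈ Metric.ball (0 : Pt m) r, H x = 1) := by

  have h0ball : (0 : Pt m) ∈ Metric.ball (0 : Pt m) r := Metric.mem_ball_self hr
  have hopen : IsOpen (Metric.ball (0 : Pt m) r) := Metric.isOpen_ball
  -- the entrywise PDE
  have key : ∀ p q : Fin n, ∀ x ∈ Metric.ball (0 : Pt m) r, (∀ s, x s ≠ 0) → ∀ s : Fin m,
      fderiv ℂ (fun y => H y p q) x (Pi.single s 1) = (a p s - a q s) / x s * H x p q := by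
    intro p q x hx hnz s
    have h := hgauge x hx hnz p q (fun _ => s)
    simp only [MForm.d, MForm.ofFun, MForm.wedge, Form.d, Form.wedge, hΩ₀, psum10, psum01, fsum01,
      Equiv.Perm.sign_one, Fin.isValue, pow_zero, one_mul,
      Units.val_one, Int.cast_one, Nat.factorial, Nat.cast_one, mul_one, one_mul, inv_one,
      Finset.mul_sum] at h
    simp only [ite_mul, mul_ite, zero_mul, mul_zero, Finset.sum_ite_eq, Finset.sum_ite_eq',
      Finset.mem_univ, if_true, Fin.val_zero, pow_zero, one_mul] at h
    rw [h]
    ring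
  -- off-diagonal entries vanish
  have offdiag : ∀ p q : Fin n, p ≠ q → ∀ x ∈ Metric.ball (0 : Pt m) r, H x p q = 0 := by
    intro p q hpq
    obtain ⟨s₀, hs₀⟩ := exists_nonint (hres p q hpq)
    have hvanish : ∀ x' ∈ Metric.ball (0 : Pt m) r, (∀ s, x' s ≠ 0) → H x' p q = 0 := by
      intro x' hx' hnz
      obtain ⟨hgdiff, hgeq⟩ := restrict (hH p q)
        (fun x hx hnzx => key p q x hx hnzx s₀) hx' hnz
      have hnat : ∀ k : ℕ, (a p s₀ - a q s₀) ≠ (k : ℂ) := by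
        intro k
        simpa using hs₀ (k : ℤ)
      have hmemz : x' s₀ ∈ Metric.ball (0 : ℂ) r := by
        rw [mem_ball_zero_iff] at hx' ⊢
        exact lt_of_le_of_lt (norm_le_pi_norm x' s₀) hx'
      have := onevar hnat hgdiff hgeq (x' s₀) hmemz
      have hx'' : (fun s => if s = s₀ then x' s₀ else x' s) = x' := by
        funext s
        by_cases hs : s = s₀ <;> simp [hs]
      rw [hx''] at this
      exact this
    exact dense_ext hr ((hH p q).continuousOn) hvanish
  -- diagonal entries are constant
  have diag : ∀ p : Fin n, ∀ x ∈ Metric.ball (0 : Pt m) r, H x p p = H 0 p p := by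
    intro p
    have hpde0 : ∀ x ∈ Metric.ball (0 : Pt m) r, (∀ s, x s ≠ 0) → ∀ s₀ : Fin m,
        fderiv ℂ (fun y => H y p p) x (Pi.single s₀ 1) = (0 : ℂ) / x s₀ * H x p p := by
      intro x hx hnz s₀
      have := key p p x hx hnz s₀
      simpa using this
    -- constancy on the dense set
    have hconst : ∀ x ∈ Metric.ball (0 : Pt m) r, (∀ s, x s ≠ 0) →
        ∀ y ∈ Metric.ball (0 : Pt m) r, (∀ s, y s ≠ 0) → H x p p = H y p p := by
      intro x hx hnzx y hy hnzy
      have hxco : ∀ s, ‖x s‖ < r := by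
        rw [mem_ball_zero_iff, pi_norm_lt_iff hr] at hx; exact hx
      have hyco : ∀ s, ‖y s‖ < r := by
        rw [mem_ball_zero_iff, pi_norm_lt_iff hr] at hy; exact hy
      set w : ℕ → Pt m := fun k s => if (s : ℕ) < k then y s else x s with hw
      have hwmem : ∀ k, w k ∈ Metric.ball (0 : Pt m) r := by
        intro k
        rw [mem_ball_zero_iff, pi_norm_lt_iff hr]
        intro s
        by_cases h : (s : ℕ) < k
        · simpa [hw, h] using hyco s
        · simpa [hw, h] using hxco s
      have hwnz : ∀ k s, w k s ≠ 0 := by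
        intro k s
        by_cases h : (s : ℕ) < k <;> simp [hw, h, hnzx s, hnzy s]
      have hstep : ∀ k, k < m → H (w k) p p = H (w (k + 1)) p p := by
        intro k hk
        set s₀ : Fin m := ⟨k, hk⟩ with hs₀
        obtain ⟨hgdiff, hgeq⟩ := restrict (hH p p)
          (fun z hz hnzz => hpde0 z hz hnzz s₀) (hwmem k) (hwnz k)
        have hderiv0 : ∀ z ∈ Metric.ball (0 : ℂ) r, z ≠ 0 →
            deriv (fun z => H (fun s => if s = s₀ then z else w k s) p p) z = 0 := by
          intro z hz hz0
          have := hgeq z hz hz0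
          rw [zero_mul] at this
          exact (mul_eq_zero.mp this).resolve_left hz0
        have hmx : x s₀ ∈ Metric.ball (0 : ℂ) r := by
          rw [mem_ball_zero_iff]; exact hxco s₀
        have hmy : y s₀ ∈ Metric.ball (0 : ℂ) r := by
          rw [mem_ball_zero_iff]; exact hyco s₀
        have hgc := const1 hgdiff hderiv0 (x s₀) hmx (y s₀) hmy
        have e1 : (fun s => if s = s₀ then x s₀ else w k s) = w k := by
          funext s
          by_cases hs : s = s₀
          · subst hs; simp [hw, hs₀]
          · simp [hs]
        have e2 : (fun s => if s = s₀ then y s₀ else w k s) = w (k + 1) := by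
          funext s
          by_cases hs : s = s₀
          · subst hs; simp [hw, hs₀]
          · have hv : (s : ℕ) ≠ k := fun hc => hs (Fin.ext hc)
            have : ((s : ℕ) < k + 1) ↔ ((s : ℕ) < k) := by omega
            simp [hw, hs, this]
        rw [e1, e2] at hgc
        exact hgc
      have hiter : ∀ k, k ≤ m → H (w 0) p p = H (w k) p p := by
        intro k
        induction k with
        | zero => intro _; rfl
        | succ k ih =>
          intro hk
          rw [ih (Nat.le_of_succ_le hk), hstep k hk]
      have hw0 : w 0 = x := by funext s; simp [hw]
      have hwm : w m = y := by funext s; simp [hw, s.isLt]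
      have := hiter m le_rfl
      rw [hw0, hwm] at this
      exact this
    -- extend by continuity: compare with a fixed interior point with nonzero coordinates
    set x₀ : Pt m := fun _ => ((r : ℂ) / 2) with hx₀
    have hx₀mem : x₀ ∈ Metric.ball (0 : Pt m) r := by
      rw [mem_ball_zero_iff, pi_norm_lt_iff hr]
      intro s
      have hcast : ((r : ℂ) / 2) = ((r / 2 : ℝ) : ℂ) := by push_cast; ring
      simp only [hx₀]
      rw [hcast, Complex.norm_real, Real.norm_eq_abs, abs_of_pos (by linarith)]
      linarith
    have hx₀nz : ∀ s, x₀ s ≠ 0 := by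
      intro s
      simp only [hx₀]
      exact div_ne_zero (Complex.ofReal_ne_zero.mpr hr.ne') two_ne_zero
    have hφ : ∀ x ∈ Metric.ball (0 : Pt m) r, H x p p - H x₀ p p = 0 := by
      apply dense_ext hr
      · exact ((hH p p).continuousOn).sub continuousOn_const
      · intro x hx hnz
        rw [sub_eq_zero]
        exact hconst x hx hnz x₀ hx₀mem hx₀nz
    intro x hx
    have h1 := hφ x hx
    have h2 := hφ 0 h0ball
    rw [sub_eq_zero] at h1 h2
    rw [h1, h2]
  -- assemble
  have hall : ∀ x ∈ Metric.ball (0 : Pt m) r, H x = H 0 := by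
    intro x hx
    funext p q
    rcases eq_or_ne p q with h | h
    · subst h; exact diag p x hx
    · rw [offdiag p q h x hx, offdiag p q h 0 h0ball]
  refine ⟨⟨H 0, fun p q hpq => offdiag p q hpq 0 h0ball, hall⟩, fun hid x hx => ?_⟩
  rw [hall x hx, hid]
end
end
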